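/- arXiv:1602.00013 — 7 statements merged into one kernel-verified Lean document; each statement's English description precedes it below -/
import Mathlib

section
/- For x = [x_ε] in ρ-ℝ̃, the following are equivalent: (1) x is invertible in ρ-ℝ̃ and x ≥ 0; (2) for each representative (x_ε) of x one has x_ε > 0 for all ε small; (3) for each representative (x_ε) of x there exists m ∈ ℕ such that x_ε > ρ_ε^m for all ε small. -/
open Filter Topology Set Asymptotics

/-- `x` is a ρ-moderate net: `x_ε = O(ρ_ε^{-a})` as `ε → 0⁺` for some `a > 0`. -/
def RMod (ρ x : ℝ → ℝ) : Prop :=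
  ∃ a : ℝ, 0 < a ∧ x =O[𝓝[>] (0:ℝ)] fun ε => ρ ε ^ (-a)

/-- `x` is a ρ-negligible net: `x_ε = O(ρ_ε^{a})` as `ε → 0⁺` for every `a > 0`. -/
def RNegl (ρ x : ℝ → ℝ) : Prop :=
  ∀ a : ℝ, 0 < a → x =O[𝓝[>] (0:ℝ)] fun ε => ρ ε ^ a

/-- The order relation of `ρ-ℝ̃` at the level of representatives:
`x ≤ y` iff `x_ε ≤ y_ε + z_ε` for `ε` small, for some ρ-negligible net `z`. -/
def RLe (ρ x y : ℝ → ℝ) : Prop :=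
  ∃ z : ℝ → ℝ, RNegl ρ z ∧ ∀ᶠ ε in 𝓝[>] (0:ℝ), x ε ≤ y ε + z ε

/-- Invertibility in `ρ-ℝ̃` at the level of representatives. -/
def RInv (ρ x : ℝ → ℝ) : Prop :=
  ∃ y : ℝ → ℝ, RMod ρ y ∧ RNegl ρ (x * y - 1)

/-- Strict order `x < y` of `ρ-ℝ̃`: some nonnegative invertible `r` satisfies `r ≤ y - x`. -/
def RLt (ρ x y : ℝ → ℝ) : Prop :=
  ∃ r : ℝ → ℝ, RMod ρ r ∧ RInv ρ r ∧ RLe ρ 0 r ∧ RLe ρ r (y - x)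

lemma aux_ev_rho (ρ : ℝ → ℝ) (hρpos : ∀ ε ∈ Set.Ioc (0:ℝ) 1, 0 < ρ ε)
    (hρ0 : Tendsto ρ (𝓝[>] (0:ℝ)) (𝓝 0)) :
    ∀ᶠ ε in 𝓝[>] (0:ℝ), 0 < ρ ε ∧ ρ ε < 1 := by
  have h1 : ∀ᶠ ε in 𝓝[>] (0:ℝ), ε ∈ Set.Ioo (0:ℝ) 1 :=
    Ioo_mem_nhdsGT_of_mem ⟨le_refl 0, one_pos⟩
  have h2 : ∀ᶠ ε in 𝓝[>] (0:ℝ), ρ ε < 1 := hρ0.eventually_lt_const one_pos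
  filter_upwards [h1, h2] with ε hε h2
  exact ⟨hρpos ε ⟨hε.1, hε.2.le⟩, h2⟩

lemma aux_negl_bound {ρ z : ℝ → ℝ}
    (hρ : ∀ᶠ ε in 𝓝[>] (0:ℝ), 0 < ρ ε ∧ ρ ε < 1)
    (hz : RNegl ρ z) {a : ℝ} (ha : 0 < a) :
    ∃ C : ℝ, ∀ᶠ ε in 𝓝[>] (0:ℝ), |z ε| ≤ C * ρ ε ^ a := by
  obtain ⟨C, hC⟩ := (hz a ha).bound
  refine ⟨C, ?_⟩
  filter_upwards [hC, hρ] with ε h1 h2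
  rwa [Real.norm_eq_abs, Real.norm_eq_abs,
    abs_of_pos (Real.rpow_pos_of_pos h2.1 a)] at h1

lemma aux_small {ρ : ℝ → ℝ} (hρ0 : Tendsto ρ (𝓝[>] (0:ℝ)) (𝓝 0))
    (K c : ℝ) (hc : 0 < c) : ∀ᶠ ε in 𝓝[>] (0:ℝ), K * ρ ε < c := by
  have h : Tendsto (fun ε => K * ρ ε) (𝓝[>] (0:ℝ)) (𝓝 (K * 0)) := hρ0.const_mul K
  rw [mul_zero] at h
  exact h.eventually_lt_const hc

lemma aux_AtoC (ρ x : ℝ → ℝ)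
    (hρ : ∀ᶠ ε in 𝓝[>] (0:ℝ), 0 < ρ ε ∧ ρ ε < 1)
    (hρ0 : Tendsto ρ (𝓝[>] (0:ℝ)) (𝓝 0))
    (hA : RInv ρ x ∧ RLe ρ 0 x) :
    ∀ x' : ℝ → ℝ, RMod ρ x' → RNegl ρ (x - x') →
      ∃ m : ℕ, ∀ᶠ ε in 𝓝[>] (0:ℝ), ρ ε ^ m < x' ε := by
  obtain ⟨⟨y, ⟨a, ha, hy⟩, hxy⟩, ⟨z, hz, hzx⟩⟩ := hA
  intro x' hx'mod hxx'
  obtain ⟨C0, hC0⟩ := hy.bound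
  set C := max C0 1 with hCdef
  have hCpos : (0:ℝ) < C := lt_of_lt_of_le one_pos (le_max_right _ _)
  have hyC : ∀ᶠ ε in 𝓝[>] (0:ℝ), |y ε| ≤ C * ρ ε ^ (-a) := by
    filter_upwards [hC0, hρ] with ε h1 h2
    rw [Real.norm_eq_abs, Real.norm_eq_abs,
      abs_of_pos (Real.rpow_pos_of_pos h2.1 _)] at h1
    exact h1.trans (mul_le_mul_of_nonneg_right (le_max_left _ _)
      (Real.rpow_pos_of_pos h2.1 _).le)
  obtain ⟨C1, hC1⟩ := aux_negl_bound hρ hxy one_pos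
  have hsmall1 : ∀ᶠ ε in 𝓝[>] (0:ℝ), C1 * ρ ε < 1/2 := aux_small hρ0 C1 _ (by norm_num)
  set c := 1 / (2 * C) with hcdef
  have hc : 0 < c := by positivity
  -- lower bound on |x|
  have hxlow : ∀ᶠ ε in 𝓝[>] (0:ℝ), c * ρ ε ^ a ≤ |x ε| := by
    filter_upwards [hyC, hC1, hsmall1, hρ] with ε h1 h2 h3 h4
    have hρp := h4.1
    have hρa : 0 < ρ ε ^ a := Real.rpow_pos_of_pos hρp a
    have hprod : ρ ε ^ (-a) * ρ ε ^ a = 1 := by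
      rw [← Real.rpow_add hρp]; simp
    have h2' : |x ε * y ε - 1| ≤ C1 * ρ ε := by
      have := h2
      simp only [Pi.sub_apply, Pi.mul_apply, Pi.one_apply, Real.rpow_one] at this
      exact this
    have h5 : (1:ℝ)/2 ≤ |x ε * y ε| := by
      have habs : |1 - x ε * y ε| = |x ε * y ε - 1| := abs_sub_comm _ _
      have := abs_sub_abs_le_abs_sub (1:ℝ) (x ε * y ε)
      rw [habs, abs_one] at this
      linarith
    rw [abs_mul] at h5
    have h6 : (1:ℝ)/2 ≤ |x ε| * (C * ρ ε ^ (-a)) :=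
      h5.trans (mul_le_mul_of_nonneg_left h1 (abs_nonneg _))
    have h7 : (1/2) * ρ ε ^ a ≤ |x ε| * C := by
      have h8 := mul_le_mul_of_nonneg_right h6 hρa.le
      calc (1/2) * ρ ε ^ a ≤ (|x ε| * (C * ρ ε ^ (-a))) * ρ ε ^ a := h8
        _ = |x ε| * C * (ρ ε ^ (-a) * ρ ε ^ a) := by ring
        _ = |x ε| * C := by rw [hprod, mul_one]
    have h9 : c * ρ ε ^ a * (2 * C) = ρ ε ^ a := by
      field_simp [hcdef]
      rw [hcdef, mul_assoc, one_div_mul_cancel (mul_pos two_pos hCpos).ne']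
    nlinarith [h7, hCpos, h9, abs_nonneg (x ε)]
  -- z small
  obtain ⟨K, hK⟩ := aux_negl_bound hρ hz (by linarith : (0:ℝ) < a + 1)
  have hsmall2 : ∀ᶠ ε in 𝓝[>] (0:ℝ), K * ρ ε < c/2 := aux_small hρ0 K _ (by positivity)
  -- x bounded below
  have hxpos : ∀ᶠ ε in 𝓝[>] (0:ℝ), c * ρ ε ^ a ≤ x ε := by
    filter_upwards [hxlow, hK, hsmall2, hzx, hρ] with ε h1 h2 h3 h4 h5
    have hρp := h5.1
    have hρa : 0 < ρ ε ^ a := Real.rpow_pos_of_pos hρp a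
    have hadd : ρ ε ^ (a + 1) = ρ ε ^ a * ρ ε := by
      rw [Real.rpow_add hρp, Real.rpow_one]
    have hz2 : |z ε| ≤ (c/2) * ρ ε ^ a := by
      rw [hadd] at h2
      calc |z ε| ≤ K * (ρ ε ^ a * ρ ε) := h2
        _ = (K * ρ ε) * ρ ε ^ a := by ring
        _ ≤ (c/2) * ρ ε ^ a := mul_le_mul_of_nonneg_right h3.le hρa.le
    have h4' : 0 ≤ x ε + z ε := by simpa using h4
    have hz3 := (abs_le.mp hz2).2
    rcases abs_cases (x ε) with ⟨heq, _⟩ | ⟨heq, _⟩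
    · rw [heq] at h1; linarith
    · rw [heq] at h1
      have := mul_pos (half_pos hc) hρa
      linarith
  -- x' bounded below
  obtain ⟨K2, hK2⟩ := aux_negl_bound hρ hxx' (by linarith : (0:ℝ) < a + 1)
  have hsmall3 : ∀ᶠ ε in 𝓝[>] (0:ℝ), K2 * ρ ε < c/2 := aux_small hρ0 K2 _ (by positivity)
  have hx'low : ∀ᶠ ε in 𝓝[>] (0:ℝ), (c/2) * ρ ε ^ a ≤ x' ε := by
    filter_upwards [hxpos, hK2, hsmall3, hρ] with ε h1 h2 h3 h4
    have hρp := h4.1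
    have hρa : 0 < ρ ε ^ a := Real.rpow_pos_of_pos hρp a
    have hadd : ρ ε ^ (a + 1) = ρ ε ^ a * ρ ε := by
      rw [Real.rpow_add hρp, Real.rpow_one]
    have h2' : |x ε - x' ε| ≤ (c/2) * ρ ε ^ a := by
      simp only [Pi.sub_apply] at h2
      rw [hadd] at h2
      calc |x ε - x' ε| ≤ K2 * (ρ ε ^ a * ρ ε) := h2
        _ = (K2 * ρ ε) * ρ ε ^ a := by ring
        _ ≤ (c/2) * ρ ε ^ a := mul_le_mul_of_nonneg_right h3.le hρa.le
    have := (abs_le.mp h2').2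
    linarith
  -- conclude
  refine ⟨⌈a⌉₊ + 1, ?_⟩
  have hsmall4 : ∀ᶠ ε in 𝓝[>] (0:ℝ), 1 * ρ ε < c/2 := aux_small hρ0 1 _ (by positivity)
  filter_upwards [hx'low, hsmall4, hρ] with ε h1 h2 h3
  have hρp := h3.1
  have hρa : 0 < ρ ε ^ a := Real.rpow_pos_of_pos hρp a
  have hm : a + 1 ≤ ((⌈a⌉₊ + 1 : ℕ) : ℝ) := by
    push_cast
    linarith [Nat.le_ceil a]
  have hle : ρ ε ^ (⌈a⌉₊ + 1 : ℕ) ≤ ρ ε ^ (a + 1) := by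
    rw [← Real.rpow_natCast (ρ ε) (⌈a⌉₊ + 1)]
    exact Real.rpow_le_rpow_of_exponent_ge hρp h3.2.le hm
  have hadd : ρ ε ^ (a + 1) = ρ ε ^ a * ρ ε := by
    rw [Real.rpow_add hρp, Real.rpow_one]
  have hlt : ρ ε ^ a * ρ ε < (c/2) * ρ ε ^ a := by
    rw [one_mul] at h2
    calc ρ ε ^ a * ρ ε < ρ ε ^ a * (c/2) := by
          exact mul_lt_mul_of_pos_left h2 hρa
      _ = (c/2) * ρ ε ^ a := by ring
  calc ρ ε ^ (⌈a⌉₊ + 1 : ℕ) ≤ ρ ε ^ a * ρ ε := hadd ▸ hle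
    _ < (c/2) * ρ ε ^ a := hlt
    _ ≤ x' ε := h1

lemma aux_BtoA (ρ x : ℝ → ℝ)
    (hρ : ∀ᶠ ε in 𝓝[>] (0:ℝ), 0 < ρ ε ∧ ρ ε < 1)
    (hx : RMod ρ x)
    (hB : ∀ x' : ℝ → ℝ, RMod ρ x' → RNegl ρ (x - x') →
      ∀ᶠ ε in 𝓝[>] (0:ℝ), 0 < x' ε) :
    RInv ρ x ∧ RLe ρ 0 x := by
  classical
  have key : ∃ m : ℕ, ∀ᶠ ε in 𝓝[>] (0:ℝ), ρ ε ^ m ≤ x ε := by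
    by_contra hcon
    push_neg at hcon
    have hfreq : ∀ m : ℕ, ∃ᶠ ε in 𝓝[>] (0:ℝ), x ε < ρ ε ^ m := by
      intro m
      have h := hcon m
      exact h
    have step : ∀ (m : ℕ) (t : ℝ), 0 < t →
        ∃ ε : ℝ, 0 < ε ∧ ε < t ∧ x ε < ρ ε ^ m ∧ 0 < ρ ε ∧ ρ ε < 1 := by
      intro m t ht
      have hm := (hfreq m).and_eventually hρ
      rw [Filter.frequently_iff] at hm
      obtain ⟨ε, hε1, hε2⟩ := hm (Ioo_mem_nhdsGT_of_mem ⟨le_refl 0, ht⟩)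
      exact ⟨ε, hε1.1, hε1.2, hε2.1, hε2.2.1, hε2.2.2⟩
    choose f hf1 hf2 hf3 hf4 hf5 using step
    -- recursive sequence
    set F : ℕ → ℝ → ℝ := fun m prev =>
      if h : 0 < prev then
        f (m+1) (min prev (1/((m:ℝ)+1))) (lt_min h (by positivity)) else 1 with hF
    set s : ℕ → ℝ := fun n => Nat.rec (1:ℝ) F n with hs
    have hssucc : ∀ m : ℕ, s (m+1) = F m (s m) := fun m => rfl
    have hspos : ∀ n : ℕ, 0 < s n := by
      intro n
      induction n with
      | zero => exact one_pos
      | succ m ih =>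
        rw [hssucc, hF]
        simp only [dif_pos ih]
        exact hf1 _ _ _
    have hprop : ∀ m : ℕ, s (m+1) < min (s m) (1/((m:ℝ)+1)) ∧
        x (s (m+1)) < ρ (s (m+1)) ^ (m+1) ∧ 0 < ρ (s (m+1)) ∧ ρ (s (m+1)) < 1 := by
      intro m
      have h := hspos m
      have hrw : s (m+1) = f (m+1) (min (s m) (1/((m:ℝ)+1))) (lt_min h (by positivity)) := by
        rw [hssucc, hF]; simp only [dif_pos h]
      rw [hrw]
      exact ⟨hf2 _ _ _, hf3 _ _ _, hf4 _ _ _, hf5 _ _ _⟩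
    have hanti : StrictAnti s := strictAnti_nat_of_succ_lt fun m =>
      lt_of_lt_of_le (hprop m).1 (min_le_left _ _)
    -- the perturbation
    set d : ℝ → ℝ := fun ε =>
      if h : ∃ m : ℕ, ε = s (m+1) then ρ ε ^ (Nat.find h + 1) else 0 with hd
    have hd_at : ∀ m : ℕ, d (s (m+1)) = ρ (s (m+1)) ^ (m+1) := by
      intro m
      have h : ∃ k : ℕ, s (m+1) = s (k+1) := ⟨m, rfl⟩
      have hfm : Nat.find h = m := by
        have hsp : s (m+1) = s (Nat.find h + 1) := Nat.find_spec h
        have h2 : m + 1 = Nat.find h + 1 := hanti.injective hsp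
        omega
      rw [hd]
      simp only [dif_pos h, hfm]
    have hd_negl : RNegl ρ d := by
      intro a ha
      apply IsBigO.of_bound 1
      set N := ⌈a⌉₊ with hN
      have hmem : ∀ᶠ ε in 𝓝[>] (0:ℝ), ε ∈ Set.Ioo (0:ℝ) (s (N+1)) :=
        Ioo_mem_nhdsGT_of_mem ⟨le_refl 0, hspos (N+1)⟩
      filter_upwards [hmem] with ε hε
      by_cases h : ∃ m : ℕ, ε = s (m+1)
      · have hdε : d ε = ρ ε ^ (Nat.find h + 1) := by rw [hd]; simp only [dif_pos h]
        set k := Nat.find h with hk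
        have hsp : ε = s (k+1) := Nat.find_spec h
        have hklt : N + 1 < k + 1 := by
          have : s (k+1) < s (N+1) := hsp ▸ hε.2
          exact (hanti.lt_iff_gt).mp this
        have hρk : 0 < ρ ε ∧ ρ ε < 1 := by
          rw [hsp]; exact ⟨(hprop k).2.2.1, (hprop k).2.2.2⟩
        have hexp : a ≤ ((k + 1 : ℕ) : ℝ) := by
          have h1 : a ≤ (N : ℝ) := Nat.le_ceil a
          have h2 : (N : ℝ) ≤ (k : ℝ) := by exact_mod_cast Nat.le_of_lt_succ (by omega)
          push_cast
          linarith
        have hle : ρ ε ^ (k+1) ≤ ρ ε ^ a := by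
          rw [← Real.rpow_natCast (ρ ε) (k+1)]
          exact Real.rpow_le_rpow_of_exponent_ge hρk.1 hρk.2.le hexp
        rw [hdε, Real.norm_eq_abs, Real.norm_eq_abs,
          abs_of_pos (pow_pos hρk.1 _), abs_of_pos (Real.rpow_pos_of_pos hρk.1 _), one_mul]
        exact hle
      · have hdε : d ε = 0 := by rw [hd]; simp only [dif_neg h]
        rw [hdε, norm_zero, one_mul]
        exact norm_nonneg _
    -- x' and contradiction
    set x' : ℝ → ℝ := fun ε => x ε - d ε with hx'
    have hdiff : RNegl ρ (x - x') := by
      have : x - x' = d := by funext ε; simp [hx']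
      rw [this]; exact hd_negl
    have hx'mod : RMod ρ x' := by
      obtain ⟨a, ha, hxO⟩ := hx
      refine ⟨a, ha, ?_⟩
      have hdO : d =O[𝓝[>] (0:ℝ)] fun ε => ρ ε ^ (-a) := by
        refine (hd_negl a ha).trans (IsBigO.of_bound 1 ?_)
        filter_upwards [hρ] with ε h
        rw [Real.norm_eq_abs, Real.norm_eq_abs, one_mul,
          abs_of_pos (Real.rpow_pos_of_pos h.1 _), abs_of_pos (Real.rpow_pos_of_pos h.1 _)]
        exact Real.rpow_le_rpow_of_exponent_ge h.1 h.2.le (by linarith)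
      exact hxO.sub hdO
    have hpos := hB x' hx'mod hdiff
    have htend : Tendsto (fun m : ℕ => s (m+1)) atTop (𝓝[>] (0:ℝ)) := by
      apply tendsto_nhdsWithin_of_tendsto_nhds_of_eventually_within
      · apply squeeze_zero (fun m => (hspos (m+1)).le)
          (fun m => (lt_of_lt_of_le (hprop m).1 (min_le_right _ _)).le)
        exact_mod_cast tendsto_one_div_add_atTop_nhds_zero_nat (𝕜 := ℝ)
      · exact Eventually.of_forall fun m => hspos (m+1)
    obtain ⟨m, hm⟩ := (htend.eventually hpos).exists
    have hxm := (hprop m).2.1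
    have : x' (s (m+1)) = x (s (m+1)) - ρ (s (m+1)) ^ (m+1) := by
      rw [hx']
      simp only [hd_at m]
    rw [this] at hm
    linarith
  -- now build the inverse
  obtain ⟨m, hm⟩ := key
  have hxpos : ∀ᶠ ε in 𝓝[>] (0:ℝ), 0 < ρ ε ^ m ∧ ρ ε ^ m ≤ x ε ∧ 0 < ρ ε ∧ ρ ε < 1 := by
    filter_upwards [hm, hρ] with ε h1 h2
    exact ⟨pow_pos h2.1 m, h1, h2⟩
  constructor
  · refine ⟨fun ε => (x ε)⁻¹, ⟨(m:ℝ) + 1, by positivity, ?_⟩, ?_⟩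
    · apply IsBigO.of_bound 1
      filter_upwards [hxpos] with ε h
      obtain ⟨hp, hle, hρp, hρ1⟩ := h
      have hxp : 0 < x ε := lt_of_lt_of_le hp hle
      rw [Real.norm_eq_abs, Real.norm_eq_abs, one_mul, abs_inv,
        abs_of_pos hxp, abs_of_pos (Real.rpow_pos_of_pos hρp _)]
      have h1 : (x ε)⁻¹ ≤ (ρ ε ^ m)⁻¹ := by
        exact inv_anti₀ hp hle
      have h2 : (ρ ε ^ m : ℝ)⁻¹ = ρ ε ^ (-(m:ℝ)) := by
        rw [← Real.rpow_natCast (ρ ε) m, ← Real.rpow_neg hρp.le]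
      have h3 : ρ ε ^ (-(m:ℝ)) ≤ ρ ε ^ (-((m:ℝ)+1)) :=
        Real.rpow_le_rpow_of_exponent_ge hρp hρ1.le (by linarith)
      calc (x ε)⁻¹ ≤ (ρ ε ^ m)⁻¹ := h1
        _ = ρ ε ^ (-(m:ℝ)) := h2
        _ ≤ ρ ε ^ (-((m:ℝ)+1)) := h3
    · intro a ha
      apply IsBigO.of_bound 1
      filter_upwards [hxpos] with ε h
      obtain ⟨hp, hle, hρp, hρ1⟩ := h
      have hxne : x ε ≠ 0 := (lt_of_lt_of_le hp hle).ne'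
      have : (x * (fun ε => (x ε)⁻¹) - 1) ε = 0 := by
        simp only [Pi.sub_apply, Pi.mul_apply, Pi.one_apply]
        rw [mul_inv_cancel₀ hxne]; ring
      rw [this, norm_zero, one_mul]
      exact norm_nonneg _
  · refine ⟨0, fun a ha => ?_, ?_⟩
    · exact (isBigO_zero (fun ε => ρ ε ^ a) (𝓝[>] (0:ℝ)) :
        (fun _ : ℝ => (0:ℝ)) =O[𝓝[>] (0:ℝ)] fun ε => ρ ε ^ a)
    · filter_upwards [hxpos] with ε h
      simp only [Pi.zero_apply, add_zero]
      exact (lt_of_lt_of_le h.1 h.2.1).le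

/-- For `x = [x_ε] ∈ ρ-ℝ̃` the following are equivalent:
(1) `x` is invertible and `x ≥ 0` (i.e. `x > 0`);
(2) every representative of `x` is eventually (for `ε` small) strictly positive;
(3) for every representative `(x'_ε)` of `x` there is `m ∈ ℕ` with `x'_ε > ρ_ε^m`
for `ε` small. -/
theorem invertible_nonneg_tfae (ρ : ℝ → ℝ)
    (hρpos : ∀ ε ∈ Set.Ioc (0:ℝ) 1, 0 < ρ ε)
    (hρ0 : Tendsto ρ (𝓝[>] (0:ℝ)) (𝓝 0))
    (x : ℝ → ℝ) (hx : RMod ρ x) :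
    ((RInv ρ x ∧ RLe ρ 0 x) ↔
      (∀ x' : ℝ → ℝ, RMod ρ x' → RNegl ρ (x - x') →
        ∀ᶠ ε in 𝓝[>] (0:ℝ), 0 < x' ε)) ∧
    ((RInv ρ x ∧ RLe ρ 0 x) ↔
      (∀ x' : ℝ → ℝ, RMod ρ x' → RNegl ρ (x - x') →
        ∃ m : ℕ, ∀ᶠ ε in 𝓝[>] (0:ℝ), ρ ε ^ m < x' ε)) := by
  have hρ := aux_ev_rho ρ hρpos hρ0
  have hAC := aux_AtoC ρ x hρ hρ0
  have hCB : (∀ x' : ℝ → ℝ, RMod ρ x' → RNegl ρ (x - x') →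
        ∃ m : ℕ, ∀ᶠ ε in 𝓝[>] (0:ℝ), ρ ε ^ m < x' ε) →
      (∀ x' : ℝ → ℝ, RMod ρ x' → RNegl ρ (x - x') →
        ∀ᶠ ε in 𝓝[>] (0:ℝ), 0 < x' ε) := by
    intro hC x' h1 h2
    obtain ⟨m, hm⟩ := hC x' h1 h2
    filter_upwards [hm, hρ] with ε hε h
    exact (pow_pos h.1 m).trans hε
  have hBA := aux_BtoA ρ x hρ hx
  exact ⟨⟨fun hA => hCB (hAC hA), hBA⟩, ⟨hAC, fun hC => hBA (hCB hC)⟩⟩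
end

section
/- If x ∈ ρ-ℝ̃ satisfies |x| ≤ r for all real r > 0 (i.e. x is infinitesimal), then for every representative (x_ε) of x one has lim_{ε→0⁺} x_ε = 0, and conversely. -/
open Filter Topology Set Asymptotics

/-- `x ∈ ρ-ℝ̃` is infinitesimal (`|x| ≤ r` for every real `r > 0`) iff
every representative `(x'_ε)` of `x` satisfies `lim_{ε→0⁺} x'_ε = 0`. -/
theorem infinitesimal_iff_tendsto_zero (ρ : ℝ → ℝ)
    (hρpos : ∀ ε ∈ Set.Ioc (0:ℝ) 1, 0 < ρ ε)
    (hρ0 : Tendsto ρ (𝓝[>] (0:ℝ)) (𝓝 0))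
    (x : ℝ → ℝ) (hx : RMod ρ x) :
    (∀ r : ℝ, 0 < r → RLe ρ (fun ε => |x ε|) (fun _ => r)) ↔
      (∀ x' : ℝ → ℝ, RMod ρ x' → RNegl ρ (x - x') →
        Tendsto x' (𝓝[>] (0:ℝ)) (𝓝 0)) := by

  have hnegl_tendsto : ∀ z : ℝ → ℝ, RNegl ρ z → Tendsto z (𝓝[>] (0:ℝ)) (𝓝 0) := by
    intro z hz
    have h1 := hz 1 one_pos
    simp only [Real.rpow_one] at h1
    exact h1.trans_tendsto hρ0
  constructor
  · intro h x' hx' hdiff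
    have hd := hnegl_tendsto _ hdiff
    have hx0 : Tendsto x (𝓝[>] (0:ℝ)) (𝓝 0) := by
      rw [Metric.tendsto_nhds]
      intro δ hδ
      obtain ⟨z, hz, hev⟩ := h (δ/2) (by linarith)
      have hz0 := hnegl_tendsto z hz
      have hz' : ∀ᶠ ε in 𝓝[>] (0:ℝ), |z ε| < δ/2 := by
        have := Metric.tendsto_nhds.mp hz0 (δ/2) (by linarith)
        simpa [Real.dist_eq] using this
      filter_upwards [hev, hz'] with ε h1 h2
      simp only [Real.dist_eq, sub_zero]
      calc |x ε| ≤ δ/2 + z ε := h1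
        _ ≤ δ/2 + |z ε| := by gcongr; exact le_abs_self _
        _ < δ := by linarith
    have heq : (fun ε => x ε - (x - x') ε) = x' := by
      funext ε; simp
    have := hx0.sub hd
    rw [sub_zero] at this
    simpa [heq] using this
  · intro h r hr
    have hxx : RNegl ρ (x - x) := by
      intro a ha
      simp only [sub_self]; exact isBigO_zero (fun ε => ρ ε ^ a) (𝓝[>] (0:ℝ))
    have hx0 := h x hx hxx
    refine ⟨0, fun a ha => ?_, ?_⟩
    · exact isBigO_zero (fun ε => ρ ε ^ a) (𝓝[>] (0:ℝ))
    · have := Metric.tendsto_nhds.mp hx0 r hr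
      filter_upwards [this] with ε hε
      simp only [Real.dist_eq, sub_zero] at hε
      simpa using hε.le
end

section
/- The family of balls B_r(c) := { x ∈ ρ-ℝ̃^n : |x − c| < r }, where c ranges over ρ-ℝ̃^n and r over all invertible positive elements of ρ-ℝ̃, forms a basis for a topology on ρ-ℝ̃^n (the sharp topology). Here a < b means that b − a is positive and invertible. -/
open Filter Topology Set Asymptotics

/-- A ρ-moderate net of points of `ℝ^n`. -/
def VMod (n : ℕ) (ρ : ℝ → ℝ) (x : ℝ → EuclideanSpace ℝ (Fin n)) : Prop :=
  ∃ a : ℝ, 0 < a ∧ (fun ε => ‖x ε‖) =O[𝓝[>] (0:ℝ)] fun ε => ρ ε ^ (-a)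

/-- A ρ-negligible net of points of `ℝ^n`. -/
def VNegl (n : ℕ) (ρ : ℝ → ℝ) (x : ℝ → EuclideanSpace ℝ (Fin n)) : Prop :=
  ∀ a : ℝ, 0 < a → (fun ε => ‖x ε‖) =O[𝓝[>] (0:ℝ)] fun ε => ρ ε ^ a

/-- `[x_ε] ∈ [A_ε]`: membership in the internal set generated by `(A_ε)`, i.e. some
representative of the class of `x` belongs to `A_ε` for `ε` small. -/
def IntMem (n : ℕ) (ρ : ℝ → ℝ) (x : ℝ → EuclideanSpace ℝ (Fin n))
    (A : ℝ → Set (EuclideanSpace ℝ (Fin n))) : Prop :=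
  ∃ x' : ℝ → EuclideanSpace ℝ (Fin n),
    VNegl n ρ (fun ε => x ε - x' ε) ∧ ∀ᶠ ε in 𝓝[>] (0:ℝ), x' ε ∈ A ε

/-- `(x_ε)` strongly belongs to `(A_ε)`, i.e. `[x_ε] ∈ ⟨A_ε⟩`: every representative of the
class of `x` belongs to `A_ε` for `ε` small. -/
def SBel (n : ℕ) (ρ : ℝ → ℝ) (x : ℝ → EuclideanSpace ℝ (Fin n))
    (A : ℝ → Set (EuclideanSpace ℝ (Fin n))) : Prop :=
  ∀ x' : ℝ → EuclideanSpace ℝ (Fin n),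
    VNegl n ρ (fun ε => x ε - x' ε) → ∀ᶠ ε in 𝓝[>] (0:ℝ), x' ε ∈ A ε

/-- The ball `B_r(c) = { x ∈ ρ-ℝ̃^n : |x - c| < r }`, described at the level of
(ρ-moderate) representatives; `|x - c|` is the class of `(‖x_ε - c_ε‖)`. -/
def SharpBall (n : ℕ) (ρ : ℝ → ℝ) (c : ℝ → EuclideanSpace ℝ (Fin n)) (r : ℝ → ℝ) :
    Set {x : ℝ → EuclideanSpace ℝ (Fin n) // VMod n ρ x} :=
  {x | RLt ρ (fun ε => ‖x.1 ε - c ε‖) r}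

/-- The family of all balls `B_r(c)` with `c ∈ ρ-ℝ̃^n` and `r` positive and invertible. -/
def SharpBalls (n : ℕ) (ρ : ℝ → ℝ) :
    Set (Set {x : ℝ → EuclideanSpace ℝ (Fin n) // VMod n ρ x}) :=
  {B | ∃ c : ℝ → EuclideanSpace ℝ (Fin n), ∃ r : ℝ → ℝ,
    VMod n ρ c ∧ RMod ρ r ∧ RLe ρ 0 r ∧ RInv ρ r ∧ B = SharpBall n ρ c r}


section Helpers
variable {ρ : ℝ → ℝ}

lemma ev_pos (hρpos : ∀ ε ∈ Set.Ioc (0:ℝ) 1, 0 < ρ ε) :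
    ∀ᶠ ε in 𝓝[>] (0:ℝ), 0 < ρ ε := by
  filter_upwards [Ioc_mem_nhdsGT_of_mem (by norm_num : (0:ℝ) ∈ Set.Ico (0:ℝ) 1)] with ε hε
  exact hρpos ε hε

lemma key2 (hρpos : ∀ ε ∈ Set.Ioc (0:ℝ) 1, 0 < ρ ε)
    (hρ0 : Tendsto ρ (𝓝[>] (0:ℝ)) (𝓝 0))
    (b c C : ℝ) (h : b < c) : ∀ᶠ ε in 𝓝[>] (0:ℝ), C * ρ ε ^ c ≤ ρ ε ^ b := by
  have hd : 0 < c - b := by linarith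
  have hcont : ContinuousAt (fun x : ℝ => x ^ (c - b)) 0 :=
    Real.continuousAt_rpow_const 0 (c - b) (Or.inr hd.le)
  have htend : Tendsto (fun ε => ρ ε ^ (c - b)) (𝓝[>] (0:ℝ)) (𝓝 0) := by
    have := hcont.tendsto.comp hρ0
    simpa [Real.zero_rpow hd.ne', Function.comp_def] using this
  have hsm : ∀ᶠ ε in 𝓝[>] (0:ℝ), ρ ε ^ (c - b) < 1 / (|C| + 1) :=
    htend.eventually_lt_const (by positivity)
  filter_upwards [ev_pos hρpos, hsm] with ε h1 h2
  have hb : (0:ℝ) < ρ ε ^ b := Real.rpow_pos_of_pos h1 b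
  have h3 : (0:ℝ) ≤ ρ ε ^ (c - b) := (Real.rpow_pos_of_pos h1 _).le
  have hsplit : ρ ε ^ c = ρ ε ^ (c - b) * ρ ε ^ b := by
    rw [← Real.rpow_add h1]; ring_nf
  calc C * ρ ε ^ c = (C * ρ ε ^ (c - b)) * ρ ε ^ b := by rw [hsplit]; ring
    _ ≤ 1 * ρ ε ^ b := by
        apply mul_le_mul_of_nonneg_right _ hb.le
        have e1 : C * ρ ε ^ (c - b) ≤ |C| * (1 / (|C| + 1)) :=
          mul_le_mul (le_abs_self C) h2.le h3 (abs_nonneg C)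
        have e2 : |C| * (1 / (|C| + 1)) ≤ 1 := by
          rw [mul_one_div, div_le_one (by positivity)]; linarith
        linarith
    _ = ρ ε ^ b := one_mul _

lemma rpow_mono (hρpos : ∀ ε ∈ Set.Ioc (0:ℝ) 1, 0 < ρ ε)
    (hρ0 : Tendsto ρ (𝓝[>] (0:ℝ)) (𝓝 0)) {b c : ℝ} (h : b ≤ c) :
    ∀ᶠ ε in 𝓝[>] (0:ℝ), ρ ε ^ c ≤ ρ ε ^ b := by
  filter_upwards [ev_pos hρpos, hρ0.eventually_lt_const one_pos] with ε h1 h2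
  exact Real.rpow_le_rpow_of_exponent_ge h1 h2.le h

lemma negl_bound (hρpos : ∀ ε ∈ Set.Ioc (0:ℝ) 1, 0 < ρ ε)
    (hρ0 : Tendsto ρ (𝓝[>] (0:ℝ)) (𝓝 0)) {w : ℝ → ℝ} (hw : RNegl ρ w) (b : ℝ) :
    ∀ᶠ ε in 𝓝[>] (0:ℝ), |w ε| ≤ ρ ε ^ b := by
  have hab : b < max b 0 + 1 := lt_of_le_of_lt (le_max_left b 0) (by linarith)
  have haa : (0:ℝ) < max b 0 + 1 := by
    have := le_max_right b 0; linarith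
  obtain ⟨Cc, hC⟩ := (hw _ haa).bound
  filter_upwards [hC, key2 hρpos hρ0 b _ Cc hab, ev_pos hρpos] with ε h1 h2 h3
  calc |w ε| = ‖w ε‖ := (Real.norm_eq_abs _).symm
    _ ≤ Cc * ‖ρ ε ^ (max b 0 + 1)‖ := h1
    _ = Cc * ρ ε ^ (max b 0 + 1) := by
        rw [Real.norm_eq_abs, abs_of_pos (Real.rpow_pos_of_pos h3 _)]
    _ ≤ ρ ε ^ b := h2

lemma mod_bound (hρpos : ∀ ε ∈ Set.Ioc (0:ℝ) 1, 0 < ρ ε)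
    (hρ0 : Tendsto ρ (𝓝[>] (0:ℝ)) (𝓝 0)) {w : ℝ → ℝ} (hw : RMod ρ w) :
    ∃ b : ℝ, ∀ᶠ ε in 𝓝[>] (0:ℝ), |w ε| ≤ ρ ε ^ b := by
  obtain ⟨a, _, hO⟩ := hw
  obtain ⟨Cc, hC⟩ := hO.bound
  refine ⟨-a - 1, ?_⟩
  filter_upwards [hC, key2 hρpos hρ0 (-a - 1) (-a) Cc (by linarith), ev_pos hρpos]
    with ε h1 h2 h3
  calc |w ε| = ‖w ε‖ := (Real.norm_eq_abs _).symm
    _ ≤ Cc * ‖ρ ε ^ (-a)‖ := h1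
    _ = Cc * ρ ε ^ (-a) := by
        rw [Real.norm_eq_abs, abs_of_pos (Real.rpow_pos_of_pos h3 _)]
    _ ≤ ρ ε ^ (-a - 1) := h2

lemma mod_of_bound (hρpos : ∀ ε ∈ Set.Ioc (0:ℝ) 1, 0 < ρ ε)
    (hρ0 : Tendsto ρ (𝓝[>] (0:ℝ)) (𝓝 0)) {w : ℝ → ℝ} {b : ℝ}
    (h : ∀ᶠ ε in 𝓝[>] (0:ℝ), |w ε| ≤ ρ ε ^ b) : RMod ρ w := by
  refine ⟨max (-b) 0 + 1, by have := le_max_right (-b) 0; linarith, ?_⟩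
  apply IsBigO.of_bound 1
  have hle : -(max (-b) 0 + 1) ≤ b := by have := le_max_left (-b) 0; linarith
  filter_upwards [h, rpow_mono hρpos hρ0 hle] with ε h1 h2
  rw [one_mul, Real.norm_eq_abs, Real.norm_eq_abs]
  exact h1.trans (h2.trans (le_abs_self _))

lemma negl_of_ev_zero {w : ℝ → ℝ} (h : ∀ᶠ ε in 𝓝[>] (0:ℝ), w ε = 0) : RNegl ρ w := by
  intro a _
  apply IsBigO.of_bound 1
  filter_upwards [h] with ε h1
  rw [h1, one_mul]
  simpa using norm_nonneg _

lemma negl_zero : RNegl ρ (fun _ => 0) :=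
  negl_of_ev_zero (Eventually.of_forall fun _ => rfl)

lemma rle_of_ev {x y : ℝ → ℝ} (h : ∀ᶠ ε in 𝓝[>] (0:ℝ), x ε ≤ y ε) : RLe ρ x y :=
  ⟨fun _ => 0, negl_zero, by filter_upwards [h] with ε h1; simpa using h1⟩

lemma inv_of_char (hρpos : ∀ ε ∈ Set.Ioc (0:ℝ) 1, 0 < ρ ε)
    (hρ0 : Tendsto ρ (𝓝[>] (0:ℝ)) (𝓝 0)) {s : ℝ → ℝ} (m : ℝ)
    (h : ∀ᶠ ε in 𝓝[>] (0:ℝ), ρ ε ^ m ≤ s ε) : RInv ρ s := by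
  refine ⟨fun ε => (s ε)⁻¹, ?_, ?_⟩
  · apply mod_of_bound hρpos hρ0 (b := -m)
    filter_upwards [h, ev_pos hρpos] with ε h1 h2
    have hm : (0:ℝ) < ρ ε ^ m := Real.rpow_pos_of_pos h2 m
    have hs : 0 < s ε := lt_of_lt_of_le hm h1
    rw [abs_of_pos (inv_pos.mpr hs), Real.rpow_neg h2.le]
    exact inv_anti₀ hm h1
  · apply negl_of_ev_zero
    filter_upwards [h, ev_pos hρpos] with ε h1 h2
    have hs : s ε ≠ 0 := (lt_of_lt_of_le (Real.rpow_pos_of_pos h2 m) h1).ne'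
    simp [Pi.sub_apply, Pi.mul_apply, mul_inv_cancel₀ hs]

lemma le0_of_char (hρpos : ∀ ε ∈ Set.Ioc (0:ℝ) 1, 0 < ρ ε) {s : ℝ → ℝ} (m : ℝ)
    (h : ∀ᶠ ε in 𝓝[>] (0:ℝ), ρ ε ^ m ≤ s ε) : RLe ρ 0 s := by
  apply rle_of_ev
  filter_upwards [h, ev_pos hρpos] with ε h1 h2
  have := Real.rpow_pos_of_pos h2 m
  simp only [Pi.zero_apply]
  linarith

lemma pos_char (hρpos : ∀ ε ∈ Set.Ioc (0:ℝ) 1, 0 < ρ ε)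
    (hρ0 : Tendsto ρ (𝓝[>] (0:ℝ)) (𝓝 0)) {r : ℝ → ℝ} (hmod : RMod ρ r)
    (hinv : RInv ρ r) (hle : RLe ρ 0 r) :
    ∃ m : ℝ, ∀ᶠ ε in 𝓝[>] (0:ℝ), ρ ε ^ m ≤ r ε := by
  obtain ⟨y, hymod, hynegl⟩ := hinv
  obtain ⟨b, hyb⟩ := mod_bound hρpos hρ0 hymod
  obtain ⟨z, hznegl, hz⟩ := hle
  refine ⟨1 - b, ?_⟩
  filter_upwards [negl_bound hρpos hρ0 hynegl 1,
    hρ0.eventually_lt_const (show (0:ℝ) < 1/2 by norm_num),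
    key2 hρpos hρ0 (-b) (1 - b) 2 (by linarith),
    negl_bound hρpos hρ0 hznegl (2 - b),
    key2 hρpos hρ0 (1 - b) (2 - b) 2 (by linarith),
    hz, hyb, ev_pos hρpos] with ε e1 e2 e3 e4 e5 e6 e7 epos
  have hP : (0:ℝ) < ρ ε ^ b := Real.rpow_pos_of_pos epos b
  have hQ : (0:ℝ) < ρ ε ^ (1 - b) := Real.rpow_pos_of_pos epos _
  have hprod : ρ ε ^ (-b) * ρ ε ^ b = 1 := by
    rw [← Real.rpow_add epos]; simp
  have hry : 1/2 ≤ r ε * y ε := by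
    have h1 := (abs_le.mp (by simpa [Pi.sub_apply, Pi.mul_apply] using e1)).1
    linarith
  have habs : 1/2 ≤ |r ε| * ρ ε ^ b := by
    calc (1/2 : ℝ) ≤ r ε * y ε := hry
      _ ≤ |r ε * y ε| := le_abs_self _
      _ = |r ε| * |y ε| := abs_mul _ _
      _ ≤ |r ε| * ρ ε ^ b := mul_le_mul_of_nonneg_left e7 (abs_nonneg _)
  have h6 : 2 * ρ ε ^ (1 - b) * ρ ε ^ b ≤ 1 := by
    calc 2 * ρ ε ^ (1 - b) * ρ ε ^ b ≤ ρ ε ^ (-b) * ρ ε ^ b :=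
          mul_le_mul_of_nonneg_right e3 hP.le
      _ = 1 := hprod
  have hQr : ρ ε ^ (1 - b) ≤ |r ε| := by
    have hmul : ρ ε ^ (1 - b) * ρ ε ^ b ≤ |r ε| * ρ ε ^ b := by linarith
    exact le_of_mul_le_mul_right hmul hP
  have hz' := abs_le.mp e4
  have e6' : 0 ≤ r ε + z ε := by simpa using e6
  rcases abs_cases (r ε) with ⟨he, _⟩ | ⟨he, _⟩
  · linarith
  · linarith

lemma rlt_of_rpow (hρpos : ∀ ε ∈ Set.Ioc (0:ℝ) 1, 0 < ρ ε)
    (hρ0 : Tendsto ρ (𝓝[>] (0:ℝ)) (𝓝 0)) {f g : ℝ → ℝ} (K : ℝ)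
    (h : ∀ᶠ ε in 𝓝[>] (0:ℝ), f ε + ρ ε ^ K ≤ g ε) : RLt ρ f g := by
  refine ⟨fun ε => ρ ε ^ K, ?_, ?_, ?_, ?_⟩
  · apply mod_of_bound hρpos hρ0 (b := K)
    filter_upwards [ev_pos hρpos] with ε h1
    rw [abs_of_pos (Real.rpow_pos_of_pos h1 K)]
  · exact inv_of_char hρpos hρ0 K (Eventually.of_forall fun _ => le_rfl)
  · exact le0_of_char hρpos K (Eventually.of_forall fun _ => le_rfl)
  · apply rle_of_ev
    filter_upwards [h] with ε h1
    simp only [Pi.sub_apply]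
    linarith

end Helpers

/-- The balls `B_r(c)`, `c ∈ ρ-ℝ̃^n`, `r ∈ ρ-ℝ̃` positive invertible,
form a basis for a topology (the sharp topology) on `ρ-ℝ̃^n`: they cover everything, and
around every point of an intersection of two balls there is a ball contained in it. -/
theorem sharp_balls_form_basis (n : ℕ) (ρ : ℝ → ℝ)
    (hρpos : ∀ ε ∈ Set.Ioc (0:ℝ) 1, 0 < ρ ε)
    (hρ0 : Tendsto ρ (𝓝[>] (0:ℝ)) (𝓝 0)) :
    (∀ x : {x : ℝ → EuclideanSpace ℝ (Fin n) // VMod n ρ x},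
      ∃ B ∈ SharpBalls n ρ, x ∈ B) ∧
    (∀ B₁ ∈ SharpBalls n ρ, ∀ B₂ ∈ SharpBalls n ρ,
      ∀ x ∈ B₁ ∩ B₂, ∃ B₃ ∈ SharpBalls n ρ, x ∈ B₃ ∧ B₃ ⊆ B₁ ∩ B₂) := by
  have mod_one : RMod ρ (fun _ => (1:ℝ)) := by
    apply mod_of_bound hρpos hρ0 (b := 0)
    filter_upwards with ε
    simp [Real.rpow_zero]
  constructor
  · -- covering
    intro x
    refine ⟨SharpBall n ρ x.1 (fun _ => 1), ⟨x.1, fun _ => 1, x.2, mod_one, ?_, ?_, rfl⟩, ?_⟩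
    · exact rle_of_ev (Eventually.of_forall fun ε => by simp)
    · exact ⟨fun _ => 1, mod_one, negl_of_ev_zero (Eventually.of_forall fun ε => by simp)⟩
    · show RLt ρ (fun ε => ‖x.1 ε - x.1 ε‖) (fun _ => 1)
      apply rlt_of_rpow hρpos hρ0 (K := 1)
      filter_upwards [hρ0.eventually_lt_const one_pos] with ε h1
      simp only [sub_self, norm_zero, Real.rpow_one, zero_add]
      exact h1.le
  · -- intersection
    rintro B₁ ⟨c₁, r₁, hc₁, hr₁mod, hr₁le, hr₁inv, rfl⟩
    rintro B₂ ⟨c₂, r₂, hc₂, hr₂mod, hr₂le, hr₂inv, rfl⟩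
    rintro x ⟨hx₁, hx₂⟩
    obtain ⟨s₁, hs₁mod, hs₁inv, hs₁le0, hs₁le⟩ := hx₁
    obtain ⟨s₂, hs₂mod, hs₂inv, hs₂le0, hs₂le⟩ := hx₂
    obtain ⟨m₁, hm₁⟩ := pos_char hρpos hρ0 hs₁mod hs₁inv hs₁le0
    obtain ⟨m₂, hm₂⟩ := pos_char hρpos hρ0 hs₂mod hs₂inv hs₂le0
    obtain ⟨z₁, hz₁negl, hz₁⟩ := hs₁le
    obtain ⟨z₂, hz₂negl, hz₂⟩ := hs₂le
    set M := max m₁ m₂ with hM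
    set sf : ℝ → ℝ := fun ε => min (s₁ ε) (s₂ ε) / 2 with hsf
    have hsf_low : ∀ᶠ ε in 𝓝[>] (0:ℝ), ρ ε ^ (M + 1) ≤ sf ε := by
      filter_upwards [hm₁, hm₂, rpow_mono hρpos hρ0 (le_max_left m₁ m₂),
        rpow_mono hρpos hρ0 (le_max_right m₁ m₂),
        key2 hρpos hρ0 M (M + 1) 2 (by linarith)] with ε e1 e2 e3 e4 e5
      have h1 : ρ ε ^ M ≤ min (s₁ ε) (s₂ ε) := le_min (e3.trans e1) (e4.trans e2)
      simp only [hsf]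
      linarith
    have hsfmod : RMod ρ sf := by
      obtain ⟨b₁, hb₁⟩ := mod_bound hρpos hρ0 hs₁mod
      apply mod_of_bound hρpos hρ0 (b := b₁)
      filter_upwards [hb₁, hm₁, hsf_low, ev_pos hρpos] with ε e1 e2 e3 epos
      have hpos : 0 < sf ε := lt_of_lt_of_le (Real.rpow_pos_of_pos epos _) e3
      have h2 : 0 < s₁ ε := lt_of_lt_of_le (Real.rpow_pos_of_pos epos _) e2
      have h3 : sf ε ≤ s₁ ε := by
        have := min_le_left (s₁ ε) (s₂ ε)
        simp only [hsf]; linarith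
      rw [abs_of_pos hpos]
      have := (abs_le.mp e1).1
      calc sf ε ≤ s₁ ε := h3
        _ ≤ |s₁ ε| := le_abs_self _
        _ ≤ ρ ε ^ b₁ := e1
    have hsfinv : RInv ρ sf := inv_of_char hρpos hρ0 (M + 1) hsf_low
    have hsfle0 : RLe ρ 0 sf := le0_of_char hρpos (M + 1) hsf_low
    refine ⟨SharpBall n ρ x.1 sf, ⟨x.1, sf, x.2, hsfmod, hsfle0, hsfinv, rfl⟩, ?_, ?_⟩
    · -- x ∈ B₃
      show RLt ρ (fun ε => ‖x.1 ε - x.1 ε‖) sf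
      apply rlt_of_rpow hρpos hρ0 (K := M + 2)
      filter_upwards [hsf_low, rpow_mono hρpos hρ0 (show M + 1 ≤ M + 2 by linarith)]
        with ε e1 e2
      simp only [sub_self, norm_zero, zero_add]
      exact e2.trans e1
    · -- B₃ ⊆ B₁ ∩ B₂
      rintro y hy
      obtain ⟨t, htmod, htinv, htle0, htle⟩ := hy
      obtain ⟨k, hk⟩ := pos_char hρpos hρ0 htmod htinv htle0
      obtain ⟨w, hwnegl, hw⟩ := htle
      constructor
      · show RLt ρ (fun ε => ‖y.1 ε - c₁ ε‖) r₁
        apply rlt_of_rpow hρpos hρ0 (K := m₁ + 1)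
        filter_upwards [hw, hz₁, hk, hm₁, negl_bound hρpos hρ0 hwnegl (m₁ + 2),
          negl_bound hρpos hρ0 hz₁negl (m₁ + 2),
          key2 hρpos hρ0 m₁ (m₁ + 1) 4 (by linarith),
          key2 hρpos hρ0 m₁ (m₁ + 2) 8 (by linarith),
          ev_pos hρpos] with ε ew ez₁ ek em₁ ewB ezB e4 e8 epos
        simp only [Pi.sub_apply] at ew ez₁
        have htri : ‖y.1 ε - c₁ ε‖ ≤ ‖y.1 ε - x.1 ε‖ + ‖x.1 ε - c₁ ε‖ := by
          have h := norm_add_le (y.1 ε - x.1 ε) (x.1 ε - c₁ ε)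
          rw [sub_add_sub_cancel] at h
          exact h
        have ht0 : 0 < t ε := lt_of_lt_of_le (Real.rpow_pos_of_pos epos k) ek
        have hsfs : sf ε ≤ s₁ ε / 2 := by
          have := min_le_left (s₁ ε) (s₂ ε)
          simp only [hsf]; linarith
        have hw' := abs_le.mp ewB
        have hz' := abs_le.mp ezB
        linarith
      · show RLt ρ (fun ε => ‖y.1 ε - c₂ ε‖) r₂
        apply rlt_of_rpow hρpos hρ0 (K := m₂ + 1)
        filter_upwards [hw, hz₂, hk, hm₂, negl_bound hρpos hρ0 hwnegl (m₂ + 2),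
          negl_bound hρpos hρ0 hz₂negl (m₂ + 2),
          key2 hρpos hρ0 m₂ (m₂ + 1) 4 (by linarith),
          key2 hρpos hρ0 m₂ (m₂ + 2) 8 (by linarith),
          ev_pos hρpos] with ε ew ez₂ ek em₂ ewB ezB e4 e8 epos
        simp only [Pi.sub_apply] at ew ez₂
        have htri : ‖y.1 ε - c₂ ε‖ ≤ ‖y.1 ε - x.1 ε‖ + ‖x.1 ε - c₂ ε‖ := by
          have h := norm_add_le (y.1 ε - x.1 ε) (x.1 ε - c₂ ε)
          rw [sub_add_sub_cancel] at h
          exact h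
        have ht0 : 0 < t ε := lt_of_lt_of_le (Real.rpow_pos_of_pos epos k) ek
        have hsfs : sf ε ≤ s₂ ε / 2 := by
          have := min_le_right (s₁ ε) (s₂ ε)
          simp only [hsf]; linarith
        have hw' := abs_le.mp ewB
        have hz' := abs_le.mp ezB
        linarith
end

section
/- Let (A_ε) be a net of subsets of ℝ^n and (x_ε) a ρ-moderate net of points of ℝ^n. Then [x_ε] ∈ [A_ε] (membership in the internal set) if and only if for all q ∈ ℝ_{>0}, d(x_ε, A_ε) ≤ ρ_ε^q for ε small; equivalently, [x_ε] ∈ [A_ε] if and only if [d(x_ε, A_ε)] = 0 in ρ-ℝ̃. -/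
open Filter Topology Set Asymptotics

/-- For a net `(A_ε)` of subsets of `ℝ^n` and a ρ-moderate net `(x_ε)`,
`[x_ε] ∈ [A_ε]` iff for all `q > 0`, `d(x_ε, A_ε) ≤ ρ_ε^q` for `ε` small (the distance to
the empty set being `+∞`); i.e. iff the generalized distance `[d(x_ε, A_ε)]` is `0`. -/
theorem internal_mem_iff_dist (n : ℕ) (ρ : ℝ → ℝ)
    (hρpos : ∀ ε ∈ Set.Ioc (0:ℝ) 1, 0 < ρ ε)
    (hρ0 : Tendsto ρ (𝓝[>] (0:ℝ)) (𝓝 0))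
    (A : ℝ → Set (EuclideanSpace ℝ (Fin n)))
    (x : ℝ → EuclideanSpace ℝ (Fin n)) (hx : VMod n ρ x) :
    IntMem n ρ x A ↔
      ∀ q : ℝ, 0 < q → ∀ᶠ ε in 𝓝[>] (0:ℝ),
        EMetric.infEdist (x ε) (A ε) ≤ ENNReal.ofReal (ρ ε ^ q) := by

  constructor
  · rintro ⟨x', hneg, hmem⟩ q hq
    obtain ⟨C, hC⟩ := (hneg (2*q) (by linarith)).bound
    have hIoo : ∀ᶠ ε in 𝓝[>] (0:ℝ), ε ∈ Set.Ioo (0:ℝ) 1 :=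
      Ioo_mem_nhdsGT_of_mem ⟨le_rfl, one_pos⟩
    have hq0 : Tendsto (fun ε => (max C 1) * ρ ε ^ q) (𝓝[>] (0:ℝ)) (𝓝 0) := by
      have h1 : Tendsto (fun ε => ρ ε ^ q) (𝓝[>] (0:ℝ)) (𝓝 0) := by
        have := hρ0.rpow_const (p := q) (Or.inr hq.le)
        simpa [Real.zero_rpow hq.ne'] using this
      simpa using (tendsto_const_nhds (x := max C 1)).mul h1
    have hsmall : ∀ᶠ ε in 𝓝[>] (0:ℝ), (max C 1) * ρ ε ^ q < 1 :=
      hq0.eventually_lt_const one_pos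
    filter_upwards [hC, hmem, hIoo, hsmall] with ε hC ε_mem hε hsm
    have hρp : 0 < ρ ε := hρpos ε ⟨hε.1, hε.2.le⟩
    have hrq : 0 < ρ ε ^ q := Real.rpow_pos_of_pos hρp q
    have hd : ‖x ε - x' ε‖ ≤ ρ ε ^ q := by
      have h2 : ρ ε ^ (2*q) = ρ ε ^ q * ρ ε ^ q := by
        rw [← Real.rpow_add hρp]; ring_nf
      have : ‖x ε - x' ε‖ ≤ C * ρ ε ^ (2*q) := by
        have := hC
        simpa [abs_of_pos (Real.rpow_pos_of_pos hρp (2*q))] using this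
      calc ‖x ε - x' ε‖ ≤ C * ρ ε ^ (2*q) := this
        _ ≤ (max C 1) * ρ ε ^ q * ρ ε ^ q := by
            rw [h2]
            have : C * (ρ ε ^ q * ρ ε ^ q) ≤ max C 1 * (ρ ε ^ q * ρ ε ^ q) :=
              mul_le_mul_of_nonneg_right (le_max_left _ _) (by positivity)
            linarith [this]
        _ ≤ 1 * ρ ε ^ q := mul_le_mul_of_nonneg_right hsm.le hrq.le
        _ = ρ ε ^ q := one_mul _
    calc EMetric.infEdist (x ε) (A ε) ≤ edist (x ε) (x' ε) :=
          EMetric.infEdist_le_edist_of_mem ε_mem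
      _ = ENNReal.ofReal (dist (x ε) (x' ε)) := edist_dist _ _
      _ ≤ ENNReal.ofReal (ρ ε ^ q) := by
          apply ENNReal.ofReal_le_ofReal
          rw [dist_eq_norm]; exact hd
  · intro H
    classical
    set x' : ℝ → EuclideanSpace ℝ (Fin n) := fun ε =>
      if h : ∃ y ∈ A ε, edist (x ε) y <
          EMetric.infEdist (x ε) (A ε) + ENNReal.ofReal (ρ ε ^ (1/ε)) then h.choose
      else x ε with hx'
    have hIoo : ∀ᶠ ε in 𝓝[>] (0:ℝ), ε ∈ Set.Ioo (0:ℝ) 1 :=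
      Ioo_mem_nhdsGT_of_mem ⟨le_rfl, one_pos⟩
    have key : ∀ᶠ ε in 𝓝[>] (0:ℝ), x' ε ∈ A ε ∧ edist (x ε) (x' ε) <
        EMetric.infEdist (x ε) (A ε) + ENNReal.ofReal (ρ ε ^ (1/ε)) := by
      filter_upwards [H 1 one_pos, hIoo] with ε h1 hε
      have hρp : 0 < ρ ε := hρpos ε ⟨hε.1, hε.2.le⟩
      have hpos : 0 < ENNReal.ofReal (ρ ε ^ (1/ε)) :=
        ENNReal.ofReal_pos.mpr (Real.rpow_pos_of_pos hρp _)
      have hlt : EMetric.infEdist (x ε) (A ε) <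
          EMetric.infEdist (x ε) (A ε) + ENNReal.ofReal (ρ ε ^ (1/ε)) :=
        ENNReal.lt_add_right (h1.trans_lt ENNReal.ofReal_lt_top).ne hpos.ne'
      obtain ⟨y, hy, hylt⟩ := EMetric.infEdist_lt_iff.mp hlt
      have hex : ∃ y ∈ A ε, edist (x ε) y <
          EMetric.infEdist (x ε) (A ε) + ENNReal.ofReal (ρ ε ^ (1/ε)) := ⟨y, hy, hylt⟩
      have hx'ε : x' ε = hex.choose := dif_pos hex
      obtain ⟨hm, hd⟩ := hex.choose_spec
      exact ⟨hx'ε ▸ hm, hx'ε ▸ hd⟩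
    refine ⟨x', ?_, key.mono fun ε h => h.1⟩
    intro a ha
    have hρlt1 : ∀ᶠ ε in 𝓝[>] (0:ℝ), ρ ε < 1 := hρ0.eventually_lt_const one_pos
    have hεsmall : ∀ᶠ ε in 𝓝[>] (0:ℝ), ε ∈ Set.Ioo (0:ℝ) (1/a) :=
      Ioo_mem_nhdsGT_of_mem ⟨le_rfl, by positivity⟩
    rw [Asymptotics.isBigO_iff]
    refine ⟨2, ?_⟩
    filter_upwards [key, H a ha, hIoo, hρlt1, hεsmall] with ε hk hHa hε hρ1 hεa
    have hρp : 0 < ρ ε := hρpos ε ⟨hε.1, hε.2.le⟩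
    have hexp : a ≤ 1/ε := by
      rw [le_div_iff₀ hε.1]
      have := hεa.2
      rw [lt_div_iff₀ ha] at this
      linarith
    have hmono : ρ ε ^ (1/ε) ≤ ρ ε ^ a :=
      Real.rpow_le_rpow_of_exponent_ge hρp hρ1.le hexp
    have hedist : edist (x ε) (x' ε) ≤ ENNReal.ofReal (ρ ε ^ a) + ENNReal.ofReal (ρ ε ^ a) := by
      calc edist (x ε) (x' ε) ≤ EMetric.infEdist (x ε) (A ε) + ENNReal.ofReal (ρ ε ^ (1/ε)) :=
            hk.2.le
        _ ≤ ENNReal.ofReal (ρ ε ^ a) + ENNReal.ofReal (ρ ε ^ a) :=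
            add_le_add hHa (ENNReal.ofReal_le_ofReal hmono)
    have hdist : dist (x ε) (x' ε) ≤ 2 * ρ ε ^ a := by
      have h2 : edist (x ε) (x' ε) ≤ ENNReal.ofReal (2 * ρ ε ^ a) := by
        rw [two_mul, ENNReal.ofReal_add (by positivity) (by positivity)]
        exact hedist
      rw [edist_dist] at h2
      exact (ENNReal.ofReal_le_ofReal_iff (by positivity)).mp h2
    have hra : 0 < ρ ε ^ a := Real.rpow_pos_of_pos hρp a
    simp only [Real.norm_eq_abs]
    rw [abs_of_nonneg (norm_nonneg _), abs_of_pos hra, ← dist_eq_norm]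
    exact hdist
end

section
/- For any net (A_ε) of subsets of ℝ^n, the internal set [A_ε] is closed in the sharp topology on ρ-ℝ̃^n, and the strongly internal set ⟨A_ε⟩ is open in the sharp topology. -/
open Filter Topology Set Asymptotics

/-- A set of (classes of) points of `ρ-ℝ̃^n` is sharply open if around each of its points it
contains a ball `B_r(x)` of positive invertible radius `r`. -/
def SharplyOpen (n : ℕ) (ρ : ℝ → ℝ)
    (S : Set {x : ℝ → EuclideanSpace ℝ (Fin n) // VMod n ρ x}) : Prop :=
  ∀ x ∈ S, ∃ r : ℝ → ℝ, RMod ρ r ∧ RLe ρ 0 r ∧ RInv ρ r ∧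
    ∀ y : {x : ℝ → EuclideanSpace ℝ (Fin n) // VMod n ρ x},
      RLt ρ (fun ε => ‖y.1 ε - x.1 ε‖) r → y ∈ S


private lemma Ioo_mem_l {δ : ℝ} (hδ : 0 < δ) : Ioo (0:ℝ) δ ∈ 𝓝[>] (0:ℝ) :=
  Ioo_mem_nhdsGT_of_mem (by simp [hδ])

private lemma mem_l_iff {s : Set ℝ} : s ∈ 𝓝[>] (0:ℝ) ↔ ∃ δ > 0, Ioo (0:ℝ) δ ⊆ s := by
  rw [mem_nhdsGT_iff_exists_Ioo_subset]
  simp [Set.mem_Ioi]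

private lemma base_ev {ρ : ℝ → ℝ} (hρpos : ∀ ε ∈ Set.Ioc (0:ℝ) 1, 0 < ρ ε)
    (hρ0 : Tendsto ρ (𝓝[>] (0:ℝ)) (𝓝 0)) {C : ℝ} (hC : 0 < C) :
    ∀ᶠ ε in 𝓝[>] (0:ℝ), 0 < ρ ε ∧ ρ ε ≤ 1 ∧ ρ ε < C := by
  have h1 : ∀ᶠ ε in 𝓝[>] (0:ℝ), ε ∈ Set.Ioc (0:ℝ) 1 :=
    Filter.mem_of_superset (Ioo_mem_l one_pos) (fun x hx => ⟨hx.1, hx.2.le⟩)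
  have h2 : ∀ᶠ ε in 𝓝[>] (0:ℝ), ρ ε ∈ Ioo (-(min C 1)) (min C 1) :=
    hρ0 (Ioo_mem_nhds (by simp [hC]) (by simp [hC]))
  filter_upwards [h1, h2] with ε hε h2
  refine ⟨hρpos ε hε, ?_, ?_⟩
  · exact le_of_lt (lt_of_lt_of_le h2.2 (min_le_right _ _))
  · exact lt_of_lt_of_le h2.2 (min_le_left _ _)

private lemma negl_lt {ρ : ℝ → ℝ} (hρpos : ∀ ε ∈ Set.Ioc (0:ℝ) 1, 0 < ρ ε)
    (hρ0 : Tendsto ρ (𝓝[>] (0:ℝ)) (𝓝 0)) {z : ℝ → ℝ} (hz : RNegl ρ z) {b : ℝ} (hb : 0 < b) :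
    ∀ᶠ ε in 𝓝[>] (0:ℝ), |z ε| < ρ ε ^ b := by
  obtain ⟨C, hC⟩ := (hz (b + 1) (by linarith)).bound
  set C' : ℝ := max C 1 with hC'
  have hC'pos : 0 < C' := lt_of_lt_of_le one_pos (le_max_right _ _)
  filter_upwards [hC, base_ev hρpos hρ0 (show (0:ℝ) < 1 / C' by positivity)] with ε h1 h2
  obtain ⟨hρp, hρ1, hρC⟩ := h2
  have hrb : (0:ℝ) < ρ ε ^ b := Real.rpow_pos_of_pos hρp b
  have he : ρ ε ^ (b + 1) = ρ ε ^ b * ρ ε := Real.rpow_add_one (ne_of_gt hρp) b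
  have h3 : |z ε| ≤ C' * (ρ ε ^ b * ρ ε) := by
    calc |z ε| = ‖z ε‖ := (Real.norm_eq_abs _).symm
    _ ≤ C * ‖ρ ε ^ (b + 1)‖ := h1
    _ ≤ C' * (ρ ε ^ b * ρ ε) := by
        rw [Real.norm_eq_abs, abs_of_pos (Real.rpow_pos_of_pos hρp _), he]
        exact mul_le_mul_of_nonneg_right (le_max_left _ _) (by positivity)
  have h4 : C' * ρ ε < 1 := by
    rw [lt_div_iff₀ hC'pos] at hρC; linarith [hρC]
  nlinarith [hrb, h3, h4]

private lemma inv_lower {ρ : ℝ → ℝ} (hρpos : ∀ ε ∈ Set.Ioc (0:ℝ) 1, 0 < ρ ε)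
    (hρ0 : Tendsto ρ (𝓝[>] (0:ℝ)) (𝓝 0)) {s : ℝ → ℝ} (hinv : RInv ρ s) (hnn : RLe ρ 0 s) :
    ∃ b : ℝ, 0 < b ∧ ∀ᶠ ε in 𝓝[>] (0:ℝ), ρ ε ^ b ≤ s ε := by
  obtain ⟨t, ⟨m, hm, htO⟩, hne⟩ := hinv
  obtain ⟨C, hC⟩ := htO.bound
  set C' : ℝ := max C 1 with hC'def
  have hC'pos : (0:ℝ) < C' := lt_of_lt_of_le one_pos (le_max_right _ _)
  obtain ⟨z, hznegl, hz⟩ := hnn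
  refine ⟨m + 1, by linarith, ?_⟩
  filter_upwards [hC, hz, negl_lt hρpos hρ0 hne one_pos,
    negl_lt hρpos hρ0 hznegl (show (0:ℝ) < m + 1 by linarith),
    base_ev hρpos hρ0 (show (0:ℝ) < 1 / (2 * C') by positivity)] with ε h1 h2 h3 h4 h5
  obtain ⟨hρp, hρ1, hρC⟩ := h5
  have hρmpos : (0:ℝ) < ρ ε ^ m := Real.rpow_pos_of_pos hρp m
  have hρm1 : ρ ε ^ (m+1) = ρ ε ^ m * ρ ε := Real.rpow_add_one (ne_of_gt hρp) m
  -- h3 : |s ε * t ε - 1| < ρ ε ^ 1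
  rw [Real.rpow_one] at h3
  have hst : (s * t - 1) ε = s ε * t ε - 1 := rfl
  rw [hst] at h3
  have h1le : (1:ℝ) ≤ C' := le_max_right _ _
  have hρhalf : ρ ε < 1/2 := by
    have : 1 / (2 * C') ≤ 1/2 := by
      rw [div_le_div_iff₀ (by positivity) (by norm_num)]
      linarith
    linarith
  have hst2 : 1/2 ≤ |s ε * t ε| := by
    have := abs_sub_abs_le_abs_sub (1:ℝ) (s ε * t ε)
    rw [abs_sub_comm] at h3
    simp only [abs_one] at this
    linarith
  rw [abs_mul] at hst2
  -- bound on |t|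
  have ht : |t ε| ≤ C' * (ρ ε ^ m)⁻¹ := by
    calc |t ε| = ‖t ε‖ := (Real.norm_eq_abs _).symm
    _ ≤ C * ‖ρ ε ^ (-m)‖ := h1
    _ ≤ C' * (ρ ε ^ m)⁻¹ := by
        rw [Real.norm_eq_abs, abs_of_pos (Real.rpow_pos_of_pos hρp _), Real.rpow_neg hρp.le]
        exact mul_le_mul_of_nonneg_right (le_max_left _ _) (by positivity)
  have hsabs : ρ ε ^ m / (2 * C') ≤ |s ε| := by
    have htpos : 0 < |t ε| := by
      by_contra h
      push_neg at h
      have : |t ε| = 0 := le_antisymm h (abs_nonneg _)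
      rw [this, mul_zero] at hst2; linarith
    rw [div_le_iff₀ (by positivity)]
    have hcancel : (ρ ε ^ m)⁻¹ * ρ ε ^ m = 1 := inv_mul_cancel₀ (ne_of_gt hρmpos)
    have htm : |t ε| * ρ ε ^ m ≤ C' := by
      have h6 := mul_le_mul_of_nonneg_right ht hρmpos.le
      rwa [mul_assoc, hcancel, mul_one] at h6
    nlinarith [mul_le_mul_of_nonneg_right hst2 hρmpos.le,
      mul_le_mul_of_nonneg_left htm (abs_nonneg (s ε)), hρmpos, abs_nonneg (s ε)]
  have hle : ρ ε ^ (m+1) ≤ |s ε| := by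
    rw [hρm1]
    calc ρ ε ^ m * ρ ε ≤ ρ ε ^ m * (1 / (2 * C')) := by
          exact mul_le_mul_of_nonneg_left hρC.le hρmpos.le
    _ = ρ ε ^ m / (2 * C') := by ring
    _ ≤ |s ε| := hsabs
  -- h2 : (0:ℝ → ℝ) ε ≤ s ε + z ε
  have h2' : 0 ≤ s ε + z ε := h2
  rcases le_or_gt 0 (s ε) with hs0 | hs0
  · rwa [abs_of_nonneg hs0] at hle
  · exfalso
    rw [abs_of_neg hs0] at hle
    have : |z ε| < ρ ε ^ (m+1) := h4
    have hz' : z ε ≤ |z ε| := le_abs_self _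
    linarith

private lemma rlt_gap {ρ : ℝ → ℝ} (hρpos : ∀ ε ∈ Set.Ioc (0:ℝ) 1, 0 < ρ ε)
    (hρ0 : Tendsto ρ (𝓝[>] (0:ℝ)) (𝓝 0)) {u r : ℝ → ℝ} (h : RLt ρ u r) :
    ∃ c : ℝ, 0 < c ∧ ∀ᶠ ε in 𝓝[>] (0:ℝ), u ε + ρ ε ^ c ≤ r ε := by
  obtain ⟨s, _, hsinv, hsnn, ⟨z, hznegl, hz⟩⟩ := h
  obtain ⟨b, hb, hsb⟩ := inv_lower hρpos hρ0 hsinv hsnn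
  refine ⟨b + 1, by linarith, ?_⟩
  filter_upwards [hsb, hz, negl_lt hρpos hρ0 hznegl (show (0:ℝ) < b + 1 by linarith),
    base_ev hρpos hρ0 (show (0:ℝ) < 1/2 by norm_num)] with ε h1 h2 h3 h4
  obtain ⟨hρp, hρ1, hρh⟩ := h4
  have h2' : s ε ≤ (r ε - u ε) + z ε := h2
  have hbpos : (0:ℝ) < ρ ε ^ b := Real.rpow_pos_of_pos hρp b
  have hb1 : ρ ε ^ (b+1) = ρ ε ^ b * ρ ε := Real.rpow_add_one (ne_of_gt hρp) b
  have hz' : z ε ≤ |z ε| := le_abs_self _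
  nlinarith [h1, h2', h3, hz', hbpos, hρh, hb1,
    mul_nonneg hbpos.le (show (0:ℝ) ≤ 1 - 2 * ρ ε by linarith)]

private lemma rad_props {ρ : ℝ → ℝ} (hρpos : ∀ ε ∈ Set.Ioc (0:ℝ) 1, 0 < ρ ε)
    (hρ0 : Tendsto ρ (𝓝[>] (0:ℝ)) (𝓝 0)) {a : ℝ} (ha : 0 < a) :
    RMod ρ (fun ε => ρ ε ^ a) ∧ RLe ρ 0 (fun ε => ρ ε ^ a) ∧ RInv ρ (fun ε => ρ ε ^ a) := by
  have hb := base_ev hρpos hρ0 (show (0:ℝ) < 1 by norm_num)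
  refine ⟨⟨a, ha, ?_⟩, ⟨(fun _ => 0), ?_, ?_⟩, ⟨(fun ε => ρ ε ^ (-a)), ⟨a, ha, isBigO_refl _ _⟩, ?_⟩⟩
  · refine IsBigO.of_bound 1 ?_
    filter_upwards [hb] with ε h
    obtain ⟨hρp, hρ1, _⟩ := h
    rw [Real.norm_eq_abs, Real.norm_eq_abs, abs_of_pos (Real.rpow_pos_of_pos hρp _),
      abs_of_pos (Real.rpow_pos_of_pos hρp _), one_mul]
    calc ρ ε ^ a ≤ 1 := Real.rpow_le_one hρp.le hρ1 ha.le
    _ ≤ ρ ε ^ (-a) := Real.one_le_rpow_of_pos_of_le_one_of_nonpos hρp hρ1 (by linarith)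
  · intro b hbp
    exact isBigO_zero _ _
  · filter_upwards [hb] with ε h
    have : (0:ℝ) ≤ ρ ε ^ a := (Real.rpow_pos_of_pos h.1 a).le
    simpa using this
  · have heq : (fun ε => (((fun ε => ρ ε ^ a) * fun ε => ρ ε ^ (-a)) - 1) ε)
        =ᶠ[𝓝[>] (0:ℝ)] (fun _ => (0:ℝ)) := by
      filter_upwards [hb] with ε h
      simp only [Pi.sub_apply, Pi.mul_apply, Pi.one_apply]
      rw [← Real.rpow_add h.1, add_neg_cancel, Real.rpow_zero, sub_self]
    intro b hbp
    exact heq.trans_isBigO (isBigO_zero _ _)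

private lemma seq_choice {Q : ℕ → ℝ → Prop} (hQ : ∀ k, ∃ᶠ ε in 𝓝[>] (0:ℝ), Q k ε) :
    ∃ e : ℕ → ℝ, StrictAnti e ∧ ∀ k, 0 < e k ∧ e k < 1/(k+1) ∧ Q k (e k) := by
  have step : ∀ k : ℕ, ∀ c : ℝ, 0 < c → ∃ ε : ℝ, 0 < ε ∧ ε < c ∧ ε < 1/(k+1) ∧ Q k ε := by
    intro k c hc
    have hmem : Ioo (0:ℝ) (min c (1/(k+1))) ∈ 𝓝[>] (0:ℝ) := by
      apply Ioo_mem_l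
      have : (0:ℝ) < 1/(k+1) := by positivity
      exact lt_min hc this
    obtain ⟨ε, hε1, hε2⟩ := ((hQ k).and_eventually (eventually_of_mem hmem (fun x hx => hx))).exists
    exact ⟨ε, hε2.1, lt_of_lt_of_le hε2.2 (min_le_left _ _),
      lt_of_lt_of_le hε2.2 (min_le_right _ _), hε1⟩
  choose F h1 h2 h3 h4 using step
  let e : ℕ → {c : ℝ // 0 < c} := fun k =>
    Nat.rec ⟨F 0 1 one_pos, h1 0 1 one_pos⟩
      (fun k ih => ⟨F (k+1) ih.1 ih.2, h1 (k+1) ih.1 ih.2⟩) k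
  have hsucc : ∀ k, (e (k+1)).1 < (e k).1 := fun k => h2 (k+1) (e k).1 (e k).2
  refine ⟨fun k => (e k).1, strictAnti_nat_of_succ_lt hsucc, fun k => ⟨(e k).2, ?_, ?_⟩⟩
  · cases k with
    | zero => exact h3 0 1 one_pos
    | succ k => exact h3 (k+1) (e k).1 (e k).2
  · cases k with
    | zero => exact h4 0 1 one_pos
    | succ k => exact h4 (k+1) (e k).1 (e k).2

private lemma intmem_of_dense {n : ℕ} {ρ : ℝ → ℝ} (hρpos : ∀ ε ∈ Set.Ioc (0:ℝ) 1, 0 < ρ ε)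
    (hρ0 : Tendsto ρ (𝓝[>] (0:ℝ)) (𝓝 0)) {x : ℝ → EuclideanSpace ℝ (Fin n)}
    {A : ℝ → Set (EuclideanSpace ℝ (Fin n))}
    (H : ∀ a : ℝ, 0 < a → ∀ᶠ ε in 𝓝[>] (0:ℝ), ∃ z ∈ A ε, dist (x ε) z < ρ ε ^ a) :
    IntMem n ρ x A := by
  set R : ℕ → ℝ → Prop := fun k ε =>
    (0 < ρ ε ∧ ρ ε ≤ 1) ∧ ∃ z ∈ A ε, dist (x ε) z < ρ ε ^ ((k:ℝ) + 1) with hR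
  have hRev : ∀ k : ℕ, ∀ᶠ ε in 𝓝[>] (0:ℝ), R k ε := by
    intro k
    filter_upwards [H ((k:ℝ)+1) (by positivity), base_ev hρpos hρ0 one_pos] with ε h1 h2
    exact ⟨⟨h2.1, h2.2.1⟩, h1⟩
  choose δ hδ1 hδ2 using fun k => mem_l_iff.mp (hRev k)
  -- the thresholds
  let η : ℕ → ℝ := fun k => Nat.rec (min (δ 0) 1) (fun k ih => min (δ (k+1)) (ih/2)) k
  have hη0 : η 0 = min (δ 0) 1 := rfl
  have hηs : ∀ k, η (k+1) = min (δ (k+1)) (η k / 2) := fun k => rfl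
  have hηpos : ∀ k, 0 < η k := by
    intro k; induction k with
    | zero => rw [hη0]; exact lt_min (hδ1 0) one_pos
    | succ k ih => rw [hηs]; exact lt_min (hδ1 (k+1)) (by linarith)
  have hηδ : ∀ k, η k ≤ δ k := by
    intro k; cases k with
    | zero => exact min_le_left _ _
    | succ k => rw [hηs]; exact min_le_left _ _
  have hηhalf : ∀ k, η (k+1) ≤ η k / 2 := by
    intro k; rw [hηs]; exact min_le_right _ _
  have hηanti : Antitone η := by
    apply antitone_nat_of_succ_le
    intro k
    have := hηhalf k; have := hηpos k; linarith
  have hηbound : ∀ k, η k ≤ (1/2)^k := by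
    intro k; induction k with
    | zero => rw [hη0]; simpa using min_le_right _ _
    | succ k ih =>
        have := hηhalf k
        have h2 : ((1:ℝ)/2)^(k+1) = (1/2)^k / 2 := by ring
        rw [h2]; linarith
  have hex : ∀ t : ℝ, 0 < t → {k : ℕ | η k ≤ t}.Nonempty := by
    intro t ht
    obtain ⟨k, hk⟩ := exists_pow_lt_of_lt_one ht (by norm_num : (1:ℝ)/2 < 1)
    exact ⟨k, le_of_lt (lt_of_le_of_lt (hηbound k) hk)⟩
  set m : ℝ → ℕ := fun t => sInf {k : ℕ | η k ≤ t} with hm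
  have hmlt : ∀ t : ℝ, 0 < t → ∀ j : ℕ, t < η j → j < m t := by
    intro t ht j hj
    by_contra h
    push_neg at h
    have h2 : η (m t) ≤ t := Nat.sInf_mem (hex t ht)
    have h3 : η j ≤ η (m t) := hηanti h
    linarith
  have hmem : ∀ t : ℝ, 0 < t → η (m t) ≤ t := fun t ht => Nat.sInf_mem (hex t ht)
  have hkey : ∀ t : ℝ, 0 < t → t < η 0 → R (m t - 1) t := by
    intro t ht h0
    have h1 : 0 < m t := hmlt t ht 0 h0
    have h2 : m t - 1 < m t := Nat.sub_lt h1 one_pos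
    have h3 : m t - 1 ∉ {k : ℕ | η k ≤ t} := Nat.notMem_of_lt_sInf h2
    have h4 : t < η (m t - 1) := lt_of_not_ge h3
    exact hδ2 (m t - 1) ⟨ht, lt_of_lt_of_le h4 (hηδ _)⟩
  choose w hw1 hw2 using fun (t : ℝ) (h1 : 0 < t) (h2 : t < η 0) => (hkey t h1 h2).2
  classical
  refine ⟨fun t : ℝ => @dite _ (0 < t ∧ t < η 0) (Classical.propDecidable _) (fun h => w t h.1 h.2) (fun _ => x t), ?_, ?_⟩
  · intro a ha
    refine IsBigO.of_bound 1 ?_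
    have hKa := Nat.le_ceil a
    set K := ⌈a⌉₊ with hK
    filter_upwards [eventually_of_mem (Ioo_mem_l (hηpos K)) (fun t ht => ht),
      base_ev hρpos hρ0 one_pos] with t ht hb
    have ht0 : 0 < t := ht.1
    have htη0 : t < η 0 := lt_of_lt_of_le ht.2 (hηanti (Nat.zero_le K))
    rw [dif_pos ⟨ht0, htη0⟩]
    have hbase := (hkey t ht0 htη0).1
    have hKm : K < m t := hmlt t ht0 K ht.2
    have hexp : a ≤ ((m t - 1 : ℕ) : ℝ) + 1 := by
      have h5 : K ≤ m t - 1 := by omega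
      have h6 : (K:ℝ) ≤ ((m t - 1 : ℕ):ℝ) := Nat.cast_le.mpr h5
      linarith
    have hlt : dist (x t) (w t ht0 htη0) < ρ t ^ a := by
      calc dist (x t) (w t ht0 htη0) < ρ t ^ (((m t - 1 : ℕ):ℝ) + 1) := hw2 t ht0 htη0
      _ ≤ ρ t ^ a := Real.rpow_le_rpow_of_exponent_ge hbase.1 hbase.2 hexp
    rw [Real.norm_eq_abs, Real.norm_eq_abs, one_mul, ← dist_eq_norm,
      abs_of_nonneg dist_nonneg, abs_of_pos (Real.rpow_pos_of_pos hbase.1 _)]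
    exact hlt.le
  · filter_upwards [eventually_of_mem (Ioo_mem_l (hηpos 0)) (fun t ht => ht)] with t ht
    rw [dif_pos ⟨ht.1, ht.2⟩]
    exact hw1 t ht.1 ht.2

private lemma sbel_gap {n : ℕ} {ρ : ℝ → ℝ} (hρpos : ∀ ε ∈ Set.Ioc (0:ℝ) 1, 0 < ρ ε)
    (hρ0 : Tendsto ρ (𝓝[>] (0:ℝ)) (𝓝 0)) {x : ℝ → EuclideanSpace ℝ (Fin n)}
    {A : ℝ → Set (EuclideanSpace ℝ (Fin n))} (hx : SBel n ρ x A) :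
    ∃ a : ℝ, 0 < a ∧ ∀ᶠ ε in 𝓝[>] (0:ℝ), ∀ z, dist (x ε) z ≤ ρ ε ^ a → z ∈ A ε := by
  classical
  by_contra hcon
  push_neg at hcon
  have hfreq : ∀ k : ℕ, ∃ᶠ ε in 𝓝[>] (0:ℝ),
      (0 < ρ ε ∧ ρ ε ≤ 1) ∧ ∃ z, dist (x ε) z ≤ ρ ε ^ ((k:ℝ)+1) ∧ z ∉ A ε := by
    intro k
    have h1 := hcon ((k:ℝ)+1) (by positivity)
    have h1 : ∃ᶠ ε in 𝓝[>] (0:ℝ), ¬ ∀ z, dist (x ε) z ≤ ρ ε ^ ((k:ℝ)+1) → z ∈ A ε :=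
      h1.mono (fun ε hε => by push_neg; exact hε)
    have h2 := h1.and_eventually (base_ev hρpos hρ0 one_pos)
    apply h2.mono
    intro ε hε
    obtain ⟨hε1, hε2⟩ := hε
    push_neg at hε1
    obtain ⟨z, hz1, hz2⟩ := hε1
    exact ⟨⟨hε2.1, hε2.2.1⟩, z, hz1, hz2⟩
  obtain ⟨e, hanti, he⟩ := seq_choice hfreq
  have hsel : ∀ t : ℝ, (∃ k, t = e k) →
      ∃ p : EuclideanSpace ℝ (Fin n), p ∉ A t ∧
        ∀ k : ℕ, t = e k → dist (x t) p ≤ ρ t ^ ((k:ℝ)+1) := by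
    rintro t ⟨k, rfl⟩
    obtain ⟨z, hz1, hz2⟩ := (he k).2.2.2
    refine ⟨z, hz2, ?_⟩
    intro k' hk'
    have : k' = k := hanti.injective hk'.symm
    subst this
    exact hz1
  choose p hp1 hp2 using hsel
  set x' : ℝ → EuclideanSpace ℝ (Fin n) :=
    fun t => @dite _ (∃ k, t = e k) (Classical.propDecidable _) (fun h => p t h) (fun _ => x t)
    with hx'
  have hnegl : VNegl n ρ (fun ε => x ε - x' ε) := by
    intro a ha
    refine IsBigO.of_bound 1 ?_
    have hKa := Nat.le_ceil a
    set K := ⌈a⌉₊ with hK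
    filter_upwards [eventually_of_mem (Ioo_mem_l (he K).1) (fun t ht => ht),
      base_ev hρpos hρ0 one_pos] with t ht hb
    have hgoal : dist (x t) (x' t) ≤ ρ t ^ a := by
      by_cases h : ∃ k, t = e k
      · simp only [hx']
        rw [dif_pos h]
        obtain ⟨k, hk⟩ := h
        have hkK : K < k := by
          by_contra hle
          push_neg at hle
          have : e K ≤ e k := hanti.antitone hle
          rw [← hk] at this
          exact absurd ht.2 (not_lt.mpr this)
        have hbase : 0 < ρ t ∧ ρ t ≤ 1 := by
          have := (he k).2.2.1
          rwa [← hk] at this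
        have hexp : a ≤ (k:ℝ) + 1 := by
          have : (K:ℝ) ≤ (k:ℝ) := Nat.cast_le.mpr hkK.le
          linarith
        calc dist (x t) (p t ⟨k, hk⟩) ≤ ρ t ^ ((k:ℝ)+1) := hp2 t ⟨k, hk⟩ k hk
        _ ≤ ρ t ^ a := Real.rpow_le_rpow_of_exponent_ge hbase.1 hbase.2 hexp
      · simp only [hx']
        rw [dif_neg h, dist_self]
        exact (Real.rpow_pos_of_pos hb.1 a).le
    rw [Real.norm_eq_abs, Real.norm_eq_abs, one_mul, ← dist_eq_norm,
      abs_of_nonneg dist_nonneg, abs_of_pos (Real.rpow_pos_of_pos hb.1 _)]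
    exact hgoal
  have hev := hx x' hnegl
  obtain ⟨δ, hδpos, hδsub⟩ := mem_l_iff.mp hev
  obtain ⟨k, hk⟩ := exists_nat_one_div_lt hδpos
  have hek : e k ∈ Ioo (0:ℝ) δ := by
    refine ⟨(he k).1, ?_⟩
    have := (he k).2.1
    calc e k < 1/(k+1) := this
    _ < δ := by exact_mod_cast hk
  have hmem : x' (e k) ∈ A (e k) := hδsub hek
  have : x' (e k) = p (e k) ⟨k, rfl⟩ := by
    simp only [hx']
    rw [dif_pos ⟨k, rfl⟩]
  rw [this] at hmem
  exact hp1 (e k) ⟨k, rfl⟩ hmem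

/-- For any net `(A_ε)` of subsets of `ℝ^n`, the internal set `[A_ε]` is
sharply closed (its complement is sharply open) and the strongly internal set `⟨A_ε⟩` is
sharply open. -/
theorem internal_closed_strongly_internal_open (n : ℕ) (ρ : ℝ → ℝ)
    (hρpos : ∀ ε ∈ Set.Ioc (0:ℝ) 1, 0 < ρ ε)
    (hρ0 : Tendsto ρ (𝓝[>] (0:ℝ)) (𝓝 0))
    (A : ℝ → Set (EuclideanSpace ℝ (Fin n))) :
    SharplyOpen n ρ {x | ¬ IntMem n ρ x.1 A} ∧
    SharplyOpen n ρ {x | SBel n ρ x.1 A} := by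
  constructor
  · rintro x hx
    simp only [Set.mem_setOf_eq] at hx
    have hGoal : ∃ a : ℝ, 0 < a ∧ ∃ᶠ ε in 𝓝[>] (0:ℝ), ∀ z ∈ A ε, ρ ε ^ a ≤ dist (x.1 ε) z := by
      by_contra hcon
      push_neg at hcon
      refine absurd (intmem_of_dense hρpos hρ0 ?_) hx
      intro a ha
      have h1 := hcon a ha
      have h1 : ∀ᶠ ε in 𝓝[>] (0:ℝ), ¬ ∀ z ∈ A ε, ρ ε ^ a ≤ dist (x.1 ε) z :=
        h1.mono (fun ε hε => by push_neg; exact hε)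
      apply h1.mono
      intro ε hε
      push_neg at hε
      obtain ⟨z, hz1, hz2⟩ := hε
      exact ⟨z, hz1, hz2⟩
    obtain ⟨a, ha, hfr⟩ := hGoal
    obtain ⟨hmod, hle, hinv⟩ := rad_props hρpos hρ0 (a := a) ha
    refine ⟨fun ε => ρ ε ^ a, hmod, hle, hinv, ?_⟩
    intro y hy
    simp only [Set.mem_setOf_eq]
    intro hIM
    obtain ⟨y', hynegl, hyA⟩ := hIM
    obtain ⟨c, hc, hev⟩ := rlt_gap hρpos hρ0 hy
    have hynegl' : RNegl ρ (fun ε => ‖y.1 ε - y' ε‖) := hynegl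
    have hsmall := negl_lt hρpos hρ0 hynegl' (show (0:ℝ) < c + 1 by linarith)
    have hcomb := hfr.and_eventually
      (hev.and (hsmall.and (hyA.and (base_ev hρpos hρ0 one_pos))))
    obtain ⟨ε, h1, h2, h3, h4, h5⟩ := hcomb.exists
    obtain ⟨hρp, hρ1, hρlt⟩ := h5
    have hd1 : dist (x.1 ε) (y' ε) ≤ ‖y.1 ε - x.1 ε‖ + ‖y.1 ε - y' ε‖ := by
      calc dist (x.1 ε) (y' ε) ≤ dist (x.1 ε) (y.1 ε) + dist (y.1 ε) (y' ε) :=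
        dist_triangle _ _ _
      _ = ‖y.1 ε - x.1 ε‖ + ‖y.1 ε - y' ε‖ := by
        rw [dist_comm (x.1 ε), dist_eq_norm, dist_eq_norm]
    have habs : |‖y.1 ε - y' ε‖| = ‖y.1 ε - y' ε‖ := abs_of_nonneg (norm_nonneg _)
    rw [habs] at h3
    have hc1 : ρ ε ^ (c+1) = ρ ε ^ c * ρ ε := Real.rpow_add_one (ne_of_gt hρp) c
    have hcpos : (0:ℝ) < ρ ε ^ c := Real.rpow_pos_of_pos hρp c
    have hlt : dist (x.1 ε) (y' ε) < ρ ε ^ a := by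
      have h6 : ρ ε ^ (c+1) < ρ ε ^ c := by
        rw [hc1]; nlinarith
      linarith
    exact absurd (h1 (y' ε) h4) (not_le.mpr hlt)
  · rintro x hx
    simp only [Set.mem_setOf_eq] at hx
    obtain ⟨a, ha, hev2⟩ := sbel_gap hρpos hρ0 hx
    obtain ⟨hmod, hle, hinv⟩ := rad_props hρpos hρ0 (a := a) ha
    refine ⟨fun ε => ρ ε ^ a, hmod, hle, hinv, ?_⟩
    intro y hy
    simp only [Set.mem_setOf_eq]
    intro y' hynegl
    obtain ⟨c, hc, hev⟩ := rlt_gap hρpos hρ0 hy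
    have hynegl' : RNegl ρ (fun ε => ‖y.1 ε - y' ε‖) := hynegl
    have hsmall := negl_lt hρpos hρ0 hynegl' hc
    filter_upwards [hev2, hev, hsmall] with ε h1 h2 h3
    apply h1
    have habs : |‖y.1 ε - y' ε‖| = ‖y.1 ε - y' ε‖ := abs_of_nonneg (norm_nonneg _)
    rw [habs] at h3
    have hd1 : dist (x.1 ε) (y' ε) ≤ ‖y.1 ε - x.1 ε‖ + ‖y.1 ε - y' ε‖ := by
      calc dist (x.1 ε) (y' ε) ≤ dist (x.1 ε) (y.1 ε) + dist (y.1 ε) (y' ε) :=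
        dist_triangle _ _ _
      _ = ‖y.1 ε - x.1 ε‖ + ‖y.1 ε - y' ε‖ := by
        rw [dist_comm (x.1 ε), dist_eq_norm, dist_eq_norm]
    linarith
end

section
/- For any net (A_ε) of subsets of ℝ^n, the internal set satisfies [A_ε] = [cl(A_ε)], where cl denotes Euclidean closure; and the strongly internal set satisfies ⟨A_ε⟩ = ⟨int(A_ε)⟩, where int denotes Euclidean interior. -/
open Filter Topology Set Asymptotics

lemma aux_event (ρ : ℝ → ℝ) (hρpos : ∀ ε ∈ Set.Ioc (0:ℝ) 1, 0 < ρ ε)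
    (hρ0 : Tendsto ρ (𝓝[>] (0:ℝ)) (𝓝 0)) :
    ∀ᶠ ε in 𝓝[>] (0:ℝ), 0 < ρ ε ∧ ρ ε < 1 ∧ ε ∈ Set.Ioc (0:ℝ) 1 := by
  have h1 : ∀ᶠ ε in 𝓝[>] (0:ℝ), ε ∈ Set.Ioo (0:ℝ) 1 := Ioo_mem_nhdsGT_of_mem (by simp)
  have h2 : ∀ᶠ ε in 𝓝[>] (0:ℝ), ρ ε < 1 := hρ0.eventually (gt_mem_nhds one_pos)
  filter_upwards [h1, h2] with ε hε hρ1
  have hmem : ε ∈ Set.Ioc (0:ℝ) 1 := ⟨hε.1, le_of_lt hε.2⟩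
  exact ⟨hρpos ε hmem, hρ1, hmem⟩

lemma negl_of_bound (n : ℕ) (ρ : ℝ → ℝ) (hρpos : ∀ ε ∈ Set.Ioc (0:ℝ) 1, 0 < ρ ε)
    (hρ0 : Tendsto ρ (𝓝[>] (0:ℝ)) (𝓝 0)) (δ : ℝ → EuclideanSpace ℝ (Fin n))
    (h : ∀ᶠ ε in 𝓝[>] (0:ℝ), ‖δ ε‖ ≤ ρ ε ^ (1/ε)) : VNegl n ρ δ := by
  intro a ha
  have hsmall : ∀ᶠ ε in 𝓝[>] (0:ℝ), ε ∈ Set.Ioo (0:ℝ) (1/a) :=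
    Ioo_mem_nhdsGT_of_mem (by simp [ha, one_div_pos.mpr ha] )
  apply IsBigO.of_bound 1
  filter_upwards [h, aux_event ρ hρpos hρ0, hsmall] with ε hb ⟨hρp, hρ1, _⟩ hεa
  have hεpos : 0 < ε := hεa.1
  have haε : a ≤ 1/ε := by
    rw [le_div_iff₀ hεpos]
    have := hεa.2
    rw [lt_div_iff₀ ha] at this
    linarith
  have : ρ ε ^ (1/ε) ≤ ρ ε ^ a := Real.rpow_le_rpow_of_exponent_ge hρp (le_of_lt hρ1) haε
  have hnn : (0:ℝ) ≤ ρ ε ^ a := (Real.rpow_pos_of_pos hρp a).le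
  simp only [one_mul, Real.norm_eq_abs, abs_of_nonneg hnn, abs_norm]
  exact hb.trans this

lemma negl_tri (n : ℕ) (ρ : ℝ → ℝ) (x x' x'' : ℝ → EuclideanSpace ℝ (Fin n))
    (h1 : VNegl n ρ (fun ε => x ε - x' ε)) (h2 : VNegl n ρ (fun ε => x' ε - x'' ε)) :
    VNegl n ρ (fun ε => x ε - x'' ε) := by
  intro a ha
  have hsum := (h1 a ha).add (h2 a ha)
  refine IsBigO.trans ?_ hsum
  apply isBigO_of_le
  intro ε
  simp only [Real.norm_eq_abs, abs_norm]
  calc ‖x ε - x'' ε‖ ≤ ‖x ε - x' ε‖ + ‖x' ε - x'' ε‖ := norm_sub_le_norm_sub_add_norm_sub _ _ _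
    _ ≤ |‖x ε - x' ε‖ + ‖x' ε - x'' ε‖| := le_abs_self _

/-- For any net `(A_ε)` of subsets of `ℝ^n`: `[A_ε] = [cl(A_ε)]` and
`⟨A_ε⟩ = ⟨int(A_ε)⟩` (as sets of points of `ρ-ℝ̃^n`). -/
theorem internal_closure_strongly_internal_interior (n : ℕ) (ρ : ℝ → ℝ)
    (hρpos : ∀ ε ∈ Set.Ioc (0:ℝ) 1, 0 < ρ ε)
    (hρ0 : Tendsto ρ (𝓝[>] (0:ℝ)) (𝓝 0))
    (A : ℝ → Set (EuclideanSpace ℝ (Fin n))) :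
    (∀ x : ℝ → EuclideanSpace ℝ (Fin n), VMod n ρ x →
      (IntMem n ρ x A ↔ IntMem n ρ x (fun ε => closure (A ε)))) ∧
    (∀ x : ℝ → EuclideanSpace ℝ (Fin n), VMod n ρ x →
      (SBel n ρ x A ↔ SBel n ρ x (fun ε => interior (A ε)))) := by
  constructor
  · intro x _
    constructor
    · rintro ⟨x', hneg, hmem⟩
      exact ⟨x', hneg, hmem.mono fun ε hε => subset_closure hε⟩
    · rintro ⟨x', hneg, hmem⟩
      classical
      set P : ℝ → Prop := fun ε => ∃ y ∈ A ε, dist (x' ε) y < ρ ε ^ (1/ε) with hP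
      set x'' : ℝ → EuclideanSpace ℝ (Fin n) := fun ε =>
        if h : P ε then h.choose else x' ε with hx''
      have hbound : ∀ᶠ ε in 𝓝[>] (0:ℝ), ‖x' ε - x'' ε‖ ≤ ρ ε ^ (1/ε) := by
        filter_upwards [aux_event ρ hρpos hρ0] with ε ⟨hρp, _, _⟩
        by_cases h : P ε
        · have := h.choose_spec.2
          simp only [hx'', dif_pos h, ← dist_eq_norm]
          exact this.le
        · simp only [hx'', dif_neg h, sub_self, norm_zero]
          exact (Real.rpow_pos_of_pos hρp _).le
      have hmem'' : ∀ᶠ ε in 𝓝[>] (0:ℝ), x'' ε ∈ A ε := by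
        filter_upwards [hmem, aux_event ρ hρpos hρ0] with ε hcl ⟨hρp, _, _⟩
        have hPε : P ε := Metric.mem_closure_iff.mp hcl _ (Real.rpow_pos_of_pos hρp _)
        simp only [hx'', dif_pos hPε]
        exact hPε.choose_spec.1
      exact ⟨x'', negl_tri n ρ x x' x'' hneg
        (negl_of_bound n ρ hρpos hρ0 _ hbound), hmem''⟩
  · intro x _
    constructor
    · intro hS x' hneg
      by_contra hcon
      have hfreq : ∃ᶠ ε in 𝓝[>] (0:ℝ), x' ε ∉ interior (A ε) :=
        Filter.not_eventually.mp hcon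
      classical
      set P : ℝ → Prop := fun ε => ∃ y, dist y (x' ε) < ρ ε ^ (1/ε) ∧ y ∉ A ε with hP
      set x'' : ℝ → EuclideanSpace ℝ (Fin n) := fun ε =>
        if h : P ε then h.choose else x' ε with hx''
      have hbound : ∀ᶠ ε in 𝓝[>] (0:ℝ), ‖x' ε - x'' ε‖ ≤ ρ ε ^ (1/ε) := by
        filter_upwards [aux_event ρ hρpos hρ0] with ε ⟨hρp, _, _⟩
        by_cases h : P ε
        · have := h.choose_spec.1
          simp only [hx'', dif_pos h]
          rw [← dist_eq_norm, dist_comm]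
          exact this.le
        · simp only [hx'', dif_neg h, sub_self, norm_zero]
          exact (Real.rpow_pos_of_pos hρp _).le
      have hmem'' := hS x'' (negl_tri n ρ x x' x'' hneg
        (negl_of_bound n ρ hρpos hρ0 _ hbound))
      rcases ((hfreq.and_eventually (hmem''.and (aux_event ρ hρpos hρ0))).exists) with
        ⟨ε, hnotint, hA, hρp, _, _⟩
      have hPε : P ε := by
        by_contra hnP
        simp only [hP] at hnP
        push_neg at hnP
        apply hnotint
        rw [mem_interior]
        refine ⟨Metric.ball (x' ε) (ρ ε ^ (1/ε)), ?_, Metric.isOpen_ball,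
          Metric.mem_ball_self (Real.rpow_pos_of_pos hρp _)⟩
        intro y hy
        by_contra hyA
        exact hyA (hnP y (Metric.mem_ball.mp hy))
      have : x'' ε = hPε.choose := by simp [hx'', dif_pos hPε]
      exact hPε.choose_spec.2 (this ▸ hA)
    · intro hS x' hneg
      exact (hS x' hneg).mono fun ε hε => interior_subset hε
end

section
/- Let A be an n×n matrix over ρ-ℝ̃. The following are equivalent: (1) A is nondegenerate, i.e. ξᵗAη = 0 for all η ∈ ρ-ℝ̃^n implies ξ = 0; (2) the linear map A : ρ-ℝ̃^n → ρ-ℝ̃^n is injective; (3) A : ρ-ℝ̃^n → ρ-ℝ̃^n is surjective; (4) det(A) is invertible in ρ-ℝ̃. -/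
open Filter Topology Set Asymptotics

/-- A vector of ρ-moderate nets, i.e. a representative of an element of `ρ-ℝ̃^n`. -/
def VecMod (n : ℕ) (ρ : ℝ → ℝ) (ξ : Fin n → ℝ → ℝ) : Prop :=
  ∀ i, RMod ρ (ξ i)

/-- A vector of ρ-negligible nets, i.e. a representative of `0 ∈ ρ-ℝ̃^n`. -/
def VecNegl (n : ℕ) (ρ : ℝ → ℝ) (ξ : Fin n → ℝ → ℝ) : Prop :=
  ∀ i, RNegl ρ (ξ i)

/-- the basic hypothesis we carry around -/
def Hb (ρ : ℝ → ℝ) : Prop := ∀ᶠ ε in 𝓝[>] (0:ℝ), 0 < ρ ε ∧ ρ ε ≤ 1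

section kit
variable {ρ : ℝ → ℝ} (hb : Hb ρ)
include hb

lemma rpow_mono_s13 {b c : ℝ} (h : b ≤ c) :
    (fun ε => ρ ε ^ c) =O[𝓝[>] (0:ℝ)] fun ε => ρ ε ^ b := by
  rw [Asymptotics.isBigO_iff]
  refine ⟨1, ?_⟩
  filter_upwards [hb] with ε ⟨h1, h2⟩
  simp only [Real.norm_eq_abs, one_mul,
    abs_of_pos (Real.rpow_pos_of_pos h1 c), abs_of_pos (Real.rpow_pos_of_pos h1 b)]
  exact Real.rpow_le_rpow_of_exponent_ge h1 h2 h

lemma rpow_add_isBigO {b c : ℝ} :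
    (fun ε => ρ ε ^ b * ρ ε ^ c) =O[𝓝[>] (0:ℝ)] fun ε => ρ ε ^ (b + c) := by
  apply Asymptotics.IsBigO.of_bound 1
  filter_upwards [hb] with ε ⟨h1, _⟩
  rw [one_mul, ← Real.rpow_add h1]

lemma rpow_add_isBigO' {b c : ℝ} :
    (fun ε => ρ ε ^ (b + c)) =O[𝓝[>] (0:ℝ)] fun ε => ρ ε ^ b * ρ ε ^ c := by
  apply Asymptotics.IsBigO.of_bound 1
  filter_upwards [hb] with ε ⟨h1, _⟩
  rw [one_mul, ← Real.rpow_add h1]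

lemma RMod.const (c : ℝ) : RMod ρ (fun _ => c) := by
  refine ⟨1, one_pos, Asymptotics.IsBigO.of_bound |c| ?_⟩
  filter_upwards [hb] with ε ⟨h1, h2⟩
  have h3 : (1:ℝ) ≤ ρ ε ^ (-(1:ℝ)) := by
    rw [Real.rpow_neg_one]
    exact (one_le_inv₀ h1).2 h2
  calc |c| = |c| * 1 := by ring
    _ ≤ |c| * |ρ ε ^ (-(1:ℝ))| := by
        refine mul_le_mul_of_nonneg_left ?_ (abs_nonneg c)
        rw [abs_of_pos (by linarith)]; exact h3

lemma RMod.mul {x y : ℝ → ℝ} (hx : RMod ρ x) (hy : RMod ρ y) :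
    RMod ρ (fun ε => x ε * y ε) := by
  obtain ⟨a, ha, hxa⟩ := hx
  obtain ⟨b, hbp, hyb⟩ := hy
  refine ⟨a + b, by linarith, ?_⟩
  have h2 : (fun ε => ρ ε ^ (-a) * ρ ε ^ (-b)) =O[𝓝[>] (0:ℝ)] fun ε => ρ ε ^ (-(a+b)) :=
    (rpow_add_isBigO hb).congr_right (by intro ε; ring_nf)
  exact (hxa.mul hyb).trans h2

lemma RMod.add {x y : ℝ → ℝ} (hx : RMod ρ x) (hy : RMod ρ y) :
    RMod ρ (fun ε => x ε + y ε) := by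
  obtain ⟨a, ha, hxa⟩ := hx
  obtain ⟨b, hbp, hyb⟩ := hy
  refine ⟨max a b, lt_max_of_lt_left ha, ?_⟩
  have hx' : x =O[𝓝[>] (0:ℝ)] fun ε => ρ ε ^ (-(max a b)) :=
    hxa.trans (rpow_mono_s13 hb (neg_le_neg (le_max_left a b)))
  have hy' : y =O[𝓝[>] (0:ℝ)] fun ε => ρ ε ^ (-(max a b)) :=
    hyb.trans (rpow_mono_s13 hb (neg_le_neg (le_max_right a b)))
  exact hx'.add hy'

omit hb in lemma RMod.neg {x : ℝ → ℝ} (hx : RMod ρ x) : RMod ρ (fun ε => -(x ε)) := by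
  obtain ⟨a, ha, hxa⟩ := hx
  exact ⟨a, ha, hxa.neg_left⟩

lemma RMod.sub {x y : ℝ → ℝ} (hx : RMod ρ x) (hy : RMod ρ y) :
    RMod ρ (fun ε => x ε - y ε) := by
  simpa [sub_eq_add_neg] using RMod.add hb hx (RMod.neg hy)

lemma RMod.sum {ι : Type*} (s : Finset ι) (f : ι → ℝ → ℝ)
    (h : ∀ i ∈ s, RMod ρ (f i)) : RMod ρ (fun ε => ∑ i ∈ s, f i ε) := by
  classical
  induction s using Finset.induction_on with
  | empty => simpa using RMod.const hb 0
  | insert a s hni ih =>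
    simp only [Finset.sum_insert hni]
    exact RMod.add hb (h a (Finset.mem_insert_self a s))
      (ih fun i hi => h i (Finset.mem_insert_of_mem hi))

lemma RMod.prod {ι : Type*} (s : Finset ι) (f : ι → ℝ → ℝ)
    (h : ∀ i ∈ s, RMod ρ (f i)) : RMod ρ (fun ε => ∏ i ∈ s, f i ε) := by
  classical
  induction s using Finset.induction_on with
  | empty => simpa using RMod.const hb 1
  | insert a s hni ih =>
    simp only [Finset.prod_insert hni]
    exact RMod.mul hb (h a (Finset.mem_insert_self a s))
      (ih fun i hi => h i (Finset.mem_insert_of_mem hi))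

omit hb in lemma RNegl.add {x y : ℝ → ℝ} (hx : RNegl ρ x) (hy : RNegl ρ y) :
    RNegl ρ (fun ε => x ε + y ε) := fun a ha => (hx a ha).add (hy a ha)

omit hb in lemma RNegl.neg {x : ℝ → ℝ} (hx : RNegl ρ x) : RNegl ρ (fun ε => -(x ε)) :=
  fun a ha => (hx a ha).neg_left

omit hb in lemma RNegl.sum {ι : Type*} (s : Finset ι) (f : ι → ℝ → ℝ)
    (h : ∀ i ∈ s, RNegl ρ (f i)) : RNegl ρ (fun ε => ∑ i ∈ s, f i ε) := by
  classical
  induction s using Finset.induction_on with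
  | empty => intro a ha; simpa using (Asymptotics.isBigO_zero _ _)
  | insert b s hni ih =>
    simp only [Finset.sum_insert hni]
    exact RNegl.add (h b (Finset.mem_insert_self b s))
      (ih fun i hi => h i (Finset.mem_insert_of_mem hi))

lemma RMod.mul_negl {x y : ℝ → ℝ} (hx : RMod ρ x) (hy : RNegl ρ y) :
    RNegl ρ (fun ε => x ε * y ε) := by
  obtain ⟨a, ha, hxa⟩ := hx
  intro b hbp
  have h2 : (fun ε => ρ ε ^ (-a) * ρ ε ^ (b+a)) =O[𝓝[>] (0:ℝ)] fun ε => ρ ε ^ b :=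
    (rpow_add_isBigO hb).congr_right (by intro ε; ring_nf)
  exact (hxa.mul (hy (b + a) (by linarith))).trans h2

omit hb in lemma RNegl.congr {x y : ℝ → ℝ} (h : x =ᶠ[𝓝[>] (0:ℝ)] y) (hx : RNegl ρ x) : RNegl ρ y :=
  fun a ha => (hx a ha).congr' h (Filter.EventuallyEq.refl _ _)

omit hb in lemma RMod.congr {x y : ℝ → ℝ} (h : x =ᶠ[𝓝[>] (0:ℝ)] y) (hx : RMod ρ x) : RMod ρ y := by
  obtain ⟨a, ha, hxa⟩ := hx
  exact ⟨a, ha, hxa.congr' h (Filter.EventuallyEq.refl _ _)⟩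

end kit

section mat
variable {ρ : ℝ → ℝ} (hb : Hb ρ)
include hb

lemma RMod.det {n : ℕ} (B : Fin n → Fin n → ℝ → ℝ) (hB : ∀ i j, RMod ρ (B i j)) :
    RMod ρ (fun ε => (Matrix.of fun i j => B i j ε).det) := by
  have hE : (fun ε => (Matrix.of fun i j => B i j ε).det) =
      fun ε => ∑ σ : Equiv.Perm (Fin n), ((Equiv.Perm.sign σ : ℤ):ℝ) * ∏ i, B (σ i) i ε := by
    funext ε; rw [Matrix.det_apply]
    simp [Units.smul_def, zsmul_eq_mul]
  rw [hE]
  exact RMod.sum hb _ _ fun σ _ =>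
    RMod.mul hb (RMod.const hb _) (RMod.prod hb _ _ fun i _ => hB (σ i) i)

lemma RMod.adj {n : ℕ} (B : Fin n → Fin n → ℝ → ℝ) (hB : ∀ i j, RMod ρ (B i j)) (i j : Fin n) :
    RMod ρ (fun ε => (Matrix.of fun i j => B i j ε).adjugate i j) := by
  have h : (fun ε => (Matrix.of fun i j => B i j ε).adjugate i j)
      = fun ε => (Matrix.of fun i' j' =>
          (fun ε' => if i' = j then (Pi.single i (1:ℝ) : Fin n → ℝ) j' else B i' j' ε') ε).det := by
    funext ε; rw [Matrix.adjugate_apply]; congr 1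
    ext i' j'
    simp [Matrix.updateRow_apply]
  rw [h]
  apply RMod.det hb
  intro i' j'
  by_cases hij : i' = j
  · simpa [hij] using RMod.const hb ((Pi.single i (1:ℝ) : Fin n → ℝ) j')
  · simpa [hij] using hB i' j'

lemma key_inj {n : ℕ} (B : Fin n → Fin n → ℝ → ℝ) (hB : ∀ i j, RMod ρ (B i j))
    (hinv : RInv ρ (fun ε => (Matrix.of fun i j => B i j ε).det))
    (ξ : Fin n → ℝ → ℝ) (hξ : ∀ i, RMod ρ (ξ i))
    (h : ∀ i, RNegl ρ (fun ε => ∑ j, B i j ε * ξ j ε)) :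
    ∀ i, RNegl ρ (ξ i) := by
  obtain ⟨y, hy, hxy⟩ := hinv
  set d : ℝ → ℝ := fun ε => (Matrix.of fun i j => B i j ε).det with hd
  have hxy' : RNegl ρ (fun ε => d ε * y ε - 1) := hxy
  intro i
  have key : ∀ ε, d ε * ξ i ε =
      ∑ j, (Matrix.of fun i j => B i j ε).adjugate i j * (∑ k, B j k ε * ξ k ε) := by
    intro ε
    set M := (Matrix.of fun i j => B i j ε)
    set v : Fin n → ℝ := fun k => ξ k ε
    have e1 : (M.adjugate).mulVec (M.mulVec v) = M.det • v := by
      rw [Matrix.mulVec_mulVec, Matrix.adjugate_mul, Matrix.smul_mulVec,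
        Matrix.one_mulVec]
    have := congrFun e1 i
    simpa [Matrix.mulVec, dotProduct, M, v] using this.symm
  have hdξ : RNegl ρ (fun ε => d ε * ξ i ε) := by
    refine RNegl.congr (Filter.Eventually.of_forall fun ε => (key ε).symm) ?_
    exact RNegl.sum _ _ fun j _ => RMod.mul_negl hb (RMod.adj hb B hB i j) (h j)
  have t1 : RNegl ρ (fun ε => y ε * (d ε * ξ i ε)) := RMod.mul_negl hb hy hdξ
  have t2 : RNegl ρ (fun ε => ξ i ε * (d ε * y ε - 1)) := RMod.mul_negl hb (hξ i) hxy'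
  refine RNegl.congr (Filter.Eventually.of_forall fun ε => ?_)
    (RNegl.add t1 (RNegl.neg t2))
  show y ε * (d ε * ξ i ε) + -(ξ i ε * (d ε * y ε - 1)) = ξ i ε
  ring

end mat

section more
variable {ρ : ℝ → ℝ} (hb : Hb ρ)
include hb

lemma key_surj {n : ℕ} (B : Fin n → Fin n → ℝ → ℝ) (hB : ∀ i j, RMod ρ (B i j))
    (hinv : RInv ρ (fun ε => (Matrix.of fun i j => B i j ε).det))
    (η : Fin n → ℝ → ℝ) (hη : ∀ i, RMod ρ (η i)) :
    ∃ ξ : Fin n → ℝ → ℝ, (∀ i, RMod ρ (ξ i)) ∧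
      ∀ i, RNegl ρ (fun ε => (∑ j, B i j ε * ξ j ε) - η i ε) := by
  obtain ⟨y, hy, hxy⟩ := hinv
  set d : ℝ → ℝ := fun ε => (Matrix.of fun i j => B i j ε).det with hd
  have hxy' : RNegl ρ (fun ε => d ε * y ε - 1) := hxy
  refine ⟨fun i ε => y ε * ∑ j, (Matrix.of fun i j => B i j ε).adjugate i j * η j ε,
    fun i => RMod.mul hb hy (RMod.sum hb _ _ fun j _ =>
      RMod.mul hb (RMod.adj hb B hB i j) (hη j)), ?_⟩
  intro i
  have key : ∀ ε, (∑ j, B i j ε *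
      (y ε * ∑ k, (Matrix.of fun i j => B i j ε).adjugate j k * η k ε)) - η i ε
      = η i ε * (d ε * y ε - 1) := by
    intro ε
    set M := (Matrix.of fun i j => B i j ε) with hM
    set w : Fin n → ℝ := fun k => η k ε with hw
    have e1 : M.mulVec ((M.adjugate).mulVec w) = M.det • w := by
      rw [Matrix.mulVec_mulVec, Matrix.mul_adjugate, Matrix.smul_mulVec,
        Matrix.one_mulVec]
    have e2 := congrFun e1 i
    simp only [Matrix.mulVec, dotProduct, Pi.smul_apply, smul_eq_mul] at e2
    have hsum : (∑ j, B i j ε * (y ε * ∑ k, M.adjugate j k * w k))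
        = y ε * ∑ j, M i j * ∑ k, M.adjugate j k * w k := by
      rw [Finset.mul_sum]; exact Finset.sum_congr rfl (fun j _ => by
        show B i j ε * _ = _
        have : M i j = B i j ε := rfl
        rw [this]; ring)
    rw [hsum, e2]
    show y ε * (d ε * w i) - w i = w i * (d ε * y ε - 1)
    ring
  refine RNegl.congr (Filter.Eventually.of_forall fun ε => (key ε).symm) ?_
  exact RMod.mul_negl hb (hη i) hxy'

lemma not_rinv {x : ℝ → ℝ} (hx : ¬ RInv ρ x) :
    ∀ b : ℝ, 0 < b → ∃ᶠ ε in 𝓝[>] (0:ℝ), |x ε| < ρ ε ^ b := by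
  by_contra hcon
  push_neg at hcon
  obtain ⟨b, hbpos, hev⟩ := hcon
  apply hx
  have hev' : ∀ᶠ ε in 𝓝[>] (0:ℝ), ρ ε ^ b ≤ |x ε| := by
    filter_upwards [hev] with ε h1 using h1
  refine ⟨fun ε => (x ε)⁻¹, ⟨b, hbpos, ?_⟩, ?_⟩
  · apply Asymptotics.IsBigO.of_bound 1
    filter_upwards [hev', hb] with ε h1 ⟨h2, h3⟩
    have hρb : 0 < ρ ε ^ b := Real.rpow_pos_of_pos h2 b
    rw [one_mul, Real.norm_eq_abs, Real.norm_eq_abs, abs_inv,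
      abs_of_pos (Real.rpow_pos_of_pos h2 (-b)), Real.rpow_neg (le_of_lt h2)]
    exact inv_anti₀ hρb h1
  · intro a hapos
    apply Asymptotics.IsBigO.of_bound 1
    filter_upwards [hev', hb] with ε h1 ⟨h2, h3⟩
    have hρb : 0 < ρ ε ^ b := Real.rpow_pos_of_pos h2 b
    have hxne : x ε ≠ 0 := by
      intro h0; rw [h0, abs_zero] at h1; linarith
    show ‖x ε * (x ε)⁻¹ - 1‖ ≤ 1 * ‖ρ ε ^ a‖
    rw [mul_inv_cancel₀ hxne, sub_self, norm_zero, one_mul]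
    positivity

end more

lemma hb_of {ρ : ℝ → ℝ} (hρpos : ∀ ε ∈ Set.Ioc (0:ℝ) 1, 0 < ρ ε)
    (hρ0 : Tendsto ρ (𝓝[>] (0:ℝ)) (𝓝 0)) : Hb ρ := by
  have h1 : ∀ᶠ ε in 𝓝[>] (0:ℝ), ε ∈ Set.Ioc (0:ℝ) 1 := by
    have : Set.Ioc (0:ℝ) 1 ∈ 𝓝[>] (0:ℝ) := Ioc_mem_nhdsGT_of_mem ⟨le_refl 0, zero_lt_one⟩
    exact this
  have h2 : ∀ᶠ ε in 𝓝[>] (0:ℝ), ρ ε < 1 := hρ0.eventually_lt_const zero_lt_one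
  filter_upwards [h1, h2] with ε hε h2' using ⟨hρpos ε hε, le_of_lt h2'⟩

lemma normalize_vec {n : ℕ} (v : Fin n → ℝ) (hv : v ≠ 0) :
    ∃ (u : Fin n → ℝ) (c : ℝ), c ≠ 0 ∧ (∃ i₀, u i₀ = 1) ∧ (∀ i, |u i| ≤ 1) ∧
      u = c • v ∧ (∀ i, |v i| ≤ |c|⁻¹) := by
  have hne : (Finset.univ : Finset (Fin n)).Nonempty := by
    rcases Function.ne_iff.1 hv with ⟨j, hj⟩
    exact ⟨j, Finset.mem_univ j⟩
  obtain ⟨i₀, -, hmax⟩ := Finset.exists_max_image Finset.univ (fun i => |v i|) hne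
  have hvi₀ : v i₀ ≠ 0 := by
    rcases Function.ne_iff.1 hv with ⟨j, hj⟩
    have := hmax j (Finset.mem_univ j)
    intro h0
    rw [h0, abs_zero] at this
    exact hj (abs_nonpos_iff.1 (by simpa using this))
  refine ⟨fun i => v i / v i₀, (v i₀)⁻¹, inv_ne_zero hvi₀, ⟨i₀, div_self hvi₀⟩, ?_, ?_, ?_⟩
  · intro i
    rw [abs_div]
    exact div_le_one_of_le₀ (hmax i (Finset.mem_univ i)) (abs_nonneg _)
  · funext i; simp [div_eq_inv_mul]
  · intro i
    rw [abs_inv, inv_inv]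
    exact hmax i (Finset.mem_univ i)

lemma det_small_vec {n : ℕ} (M : Matrix (Fin n) (Fin n) ℝ) (s : ℝ) (hs : 0 < s)
    (hdet : |M.det| * (n.factorial : ℝ) < s ^ n) :
    ∃ v : Fin n → ℝ, (∃ i₀, v i₀ = 1) ∧ (∀ i, |v i| ≤ 1) ∧ ∀ i, |M.mulVec v i| ≤ s := by
  by_contra hcon
  push_neg at hcon
  -- hcon : ∀ v, (∃ i₀, v i₀ = 1) → (∀ i, |v i| ≤ 1) → ∃ i, s < |M.mulVec v i|
  have hdet0 : M.det ≠ 0 := by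
    intro h0
    obtain ⟨v, hv0, hv⟩ := (Matrix.exists_mulVec_eq_zero_iff).2 h0
    obtain ⟨u, c, hc, hu1, hu2, huc, -⟩ := normalize_vec v hv0
    have hMu : M.mulVec u = 0 := by
      rw [huc, Matrix.mulVec_smul, hv, smul_zero]
    obtain ⟨i, hi⟩ := hcon u hu1 hu2
    rw [hMu] at hi
    simp at hi
    linarith
  have hunit : IsUnit M.det := isUnit_iff_ne_zero.2 hdet0
  -- entry bound for M⁻¹
  have hentry : ∀ i j, |M⁻¹ i j| ≤ 1 / s := by
    intro i j
    set w : Fin n → ℝ := fun k => M⁻¹ k j with hw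
    by_cases hw0 : w = 0
    · have : M⁻¹ i j = 0 := congrFun hw0 i
      rw [this, abs_zero]; positivity
    · obtain ⟨u, c, hc, hu1, hu2, huc, hbnd⟩ := normalize_vec w hw0
      have hMw : M.mulVec w = Pi.single j 1 := by
        have : M.mulVec (M⁻¹.mulVec (Pi.single j 1)) = Pi.single j 1 := by
          rw [Matrix.mulVec_mulVec, Matrix.mul_nonsing_inv M hunit, Matrix.one_mulVec]
        have hw' : M⁻¹.mulVec (Pi.single j 1) = w := by
          funext k
          simp [Matrix.mulVec_single, hw]
        rwa [hw'] at this
      obtain ⟨i', hi'⟩ := hcon u hu1 hu2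
      have : M.mulVec u = c • (Pi.single j 1 : Fin n → ℝ) := by
        rw [huc, Matrix.mulVec_smul, hMw]
      rw [this] at hi'
      have hble : |c • (Pi.single j 1 : Fin n → ℝ) i'| ≤ |c| := by
        rcases eq_or_ne i' j with h | h
        · simp [h, Pi.single_apply, abs_mul]
        · simp [Pi.single_apply, h, abs_nonneg]
      have hsc : s < |c| := lt_of_lt_of_le hi' hble
      have : |c|⁻¹ ≤ 1 / s := by
        rw [one_div]
        exact inv_anti₀ hs hsc.le
      exact le_trans (hbnd i) this
  -- determinant bound for M⁻¹
  have hdpos : 0 < |M.det| := abs_pos.2 hdet0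
  have hdinv : |M.det|⁻¹ ≤ (n.factorial : ℝ) * (s ^ n)⁻¹ := by
    have h := Matrix.det_le (A := M⁻¹) (abv := AbsoluteValue.abs) (x := 1/s) hentry
    have hdd : M⁻¹.det = (M.det)⁻¹ := by
      rw [Matrix.det_nonsing_inv, Ring.inverse_eq_inv']
    rw [hdd] at h
    simpa [nsmul_eq_mul, Fintype.card_fin, abs_inv, one_div, ← inv_pow] using h
  have h5 : 1 ≤ |M.det| * ((n.factorial : ℝ) * (s ^ n)⁻¹) := by
    calc (1:ℝ) = |M.det| * |M.det|⁻¹ := by rw [mul_inv_cancel₀ (ne_of_gt hdpos)]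
    _ ≤ |M.det| * ((n.factorial : ℝ) * (s ^ n)⁻¹) :=
        mul_le_mul_of_nonneg_left hdinv hdpos.le
  have hss : s ^ n * (s ^ n)⁻¹ = 1 := mul_inv_cancel₀ (by positivity)
  have h6 : s ^ n ≤ |M.det| * (n.factorial : ℝ) := by
    calc s ^ n = s ^ n * 1 := (mul_one _).symm
    _ ≤ s ^ n * (|M.det| * ((n.factorial : ℝ) * (s ^ n)⁻¹)) :=
        mul_le_mul_of_nonneg_left h5 (pow_nonneg hs.le n)
    _ = |M.det| * (n.factorial : ℝ) * (s ^ n * (s ^ n)⁻¹) := by ring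
    _ = |M.det| * (n.factorial : ℝ) := by rw [hss, mul_one]
  linarith

section small
variable {ρ : ℝ → ℝ} (hb : Hb ρ)
include hb

lemma RMod.of_bounded {x : ℝ → ℝ} {C : ℝ} (h : ∀ e, |x e| ≤ C) : RMod ρ x := by
  refine ⟨1, one_pos, Asymptotics.IsBigO.of_bound C ?_⟩
  filter_upwards [hb] with ε ⟨h1, h2⟩
  have h3 : (1:ℝ) ≤ ρ ε ^ (-(1:ℝ)) := by
    rw [Real.rpow_neg_one]; exact (one_le_inv₀ h1).2 h2
  have hC : 0 ≤ C := le_trans (abs_nonneg _) (h ε)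
  rw [Real.norm_eq_abs, Real.norm_eq_abs, abs_of_pos (Real.rpow_pos_of_pos h1 _)]
  calc |x ε| ≤ C := h ε
  _ = C * 1 := (mul_one C).symm
  _ ≤ C * ρ ε ^ (-(1:ℝ)) := mul_le_mul_of_nonneg_left h3 hC

omit hb in
lemma RNegl.of_abs_le {x y : ℝ → ℝ} (h : ∀ e, |x e| ≤ |y e|) (hy : RNegl ρ y) : RNegl ρ x :=
  fun a ha => (Asymptotics.IsBigO.of_bound 1
    (Filter.Eventually.of_forall fun e => by
      simpa [Real.norm_eq_abs] using h e)).trans (hy a ha)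

lemma RNegl.of_sq {x : ℝ → ℝ} (h : RNegl ρ (fun e => x e ^ 2)) : RNegl ρ x := by
  intro a ha
  obtain ⟨C, hC⟩ := (Asymptotics.isBigO_iff.1 (h (2*a) (by linarith)))
  apply Asymptotics.IsBigO.of_bound (Real.sqrt (max C 0))
  filter_upwards [hC, hb] with e h1 ⟨h2, h3⟩
  simp only [Real.norm_eq_abs] at h1 ⊢
  have hρa : 0 < ρ e ^ a := Real.rpow_pos_of_pos h2 a
  have hρ2a : 0 < ρ e ^ (2*a) := Real.rpow_pos_of_pos h2 _
  have hkey : ρ e ^ (2*a) = (ρ e ^ a)^2 := by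
    rw [mul_comm, Real.rpow_mul h2.le, ← Real.rpow_natCast (ρ e ^ a) 2]
    norm_num
  have hx2 : x e ^ 2 ≤ (max C 0) * (ρ e ^ a)^2 := by
    rw [← hkey]
    have e1 : |x e ^ 2| = x e ^ 2 := abs_of_nonneg (sq_nonneg _)
    have e2 : |ρ e ^ (2*a)| = ρ e ^ (2*a) := abs_of_pos hρ2a
    nlinarith [le_max_left C 0, le_max_right C (0:ℝ)]
  have h4 : |x e|^2 ≤ (Real.sqrt (max C 0) * |ρ e ^ a|)^2 := by
    rw [mul_pow, Real.sq_sqrt (le_max_right C 0), sq_abs, sq_abs]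
    exact hx2
  have h5 := Real.sqrt_le_sqrt h4
  rwa [Real.sqrt_sq (abs_nonneg _), Real.sqrt_sq (by positivity)] at h5

end small

lemma exists_kernel {n : ℕ} (hn : 0 < n) {ρ : ℝ → ℝ}
    (hρpos : ∀ ε ∈ Set.Ioc (0:ℝ) 1, 0 < ρ ε)
    (hρ0 : Tendsto ρ (𝓝[>] (0:ℝ)) (𝓝 0))
    (B : Fin n → Fin n → ℝ → ℝ)
    (hnot : ¬ RInv ρ (fun ε => (Matrix.of fun i j => B i j ε).det)) :
    ∃ ξ : Fin n → ℝ → ℝ, (∀ i e, |ξ i e| ≤ 1) ∧ (¬ ∀ i, RNegl ρ (ξ i)) ∧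
      (∀ i, RNegl ρ (fun ε => ∑ j, B i j ε * ξ j ε)) := by
  classical
  have hb : Hb ρ := hb_of hρpos hρ0
  set d : ℝ → ℝ := fun ε => (Matrix.of fun i j => B i j ε).det with hd
  have hfreq := not_rinv hb hnot
  have Hstep : ∀ (k : ℕ) (δ : ℝ), 0 < δ → ∃ e : ℝ, 0 < e ∧ e < δ ∧ e ≤ 1 ∧
      |d e| < ρ e ^ ((n*(k+1) : ℕ) : ℝ) := by
    intro k δ hδ
    have hmem : Set.Ioo (0:ℝ) (min δ 1) ∈ 𝓝[>] (0:ℝ) :=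
      Ioo_mem_nhdsGT_of_mem ⟨le_refl 0, lt_min hδ one_pos⟩
    have hmem' : ∀ᶠ e in 𝓝[>] (0:ℝ), e ∈ Set.Ioo (0:ℝ) (min δ 1) := hmem
    have hbpos : (0:ℝ) < ((n*(k+1) : ℕ) : ℝ) := by
      exact_mod_cast Nat.mul_pos hn (Nat.succ_pos k)
    obtain ⟨e, he1, he2⟩ := ((hfreq _ hbpos).and_eventually hmem').exists
    exact ⟨e, he2.1, lt_of_lt_of_le he2.2 (min_le_left _ _),
      le_of_lt (lt_of_lt_of_le he2.2 (min_le_right _ _)), he1⟩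
  have Hstep' : ∀ (k : ℕ) (p : {e : ℝ // 0 < e}), ∃ q : {e : ℝ // 0 < e},
      q.1 < min p.1 ((1:ℝ)/(k+1)) ∧ q.1 ≤ 1 ∧ |d q.1| < ρ q.1 ^ ((n*(k+1) : ℕ) : ℝ) := by
    intro k p
    obtain ⟨e, h1, h2, h3, h4⟩ := Hstep k (min p.1 ((1:ℝ)/(k+1))) (lt_min p.2 (by positivity))
    exact ⟨⟨e, h1⟩, h2, h3, h4⟩
  choose F hF1 hF2 hF3 using Hstep'
  set E : ℕ → {e : ℝ // 0 < e} :=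
    fun k => Nat.rec (F 0 ⟨1, one_pos⟩) (fun k prev => F (k+1) prev) k with hE
  set ε : ℕ → ℝ := fun k => (E k).1 with hεdef
  have hεpos : ∀ k, 0 < ε k := fun k => (E k).2
  have hprop : ∀ k, ε k < (1:ℝ)/(k+1) ∧ ε k ≤ 1 ∧ |d (ε k)| < ρ (ε k) ^ ((n*(k+1) : ℕ) : ℝ) := by
    intro k
    cases k with
    | zero => exact ⟨lt_of_lt_of_le (hF1 0 ⟨1, one_pos⟩) (min_le_right _ _),
        hF2 0 ⟨1, one_pos⟩, hF3 0 ⟨1, one_pos⟩⟩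
    | succ k => exact ⟨lt_of_lt_of_le (hF1 (k+1) (E k)) (min_le_right _ _),
        hF2 (k+1) (E k), hF3 (k+1) (E k)⟩
  have hlt : ∀ k, ε k < (1:ℝ)/(k+1) := fun k => (hprop k).1
  have hle1 : ∀ k, ε k ≤ 1 := fun k => (hprop k).2.1
  have hdlt : ∀ k, |d (ε k)| < ρ (ε k) ^ ((n*(k+1) : ℕ) : ℝ) := fun k => (hprop k).2.2
  have hdec : ∀ k, ε (k+1) < ε k := fun k =>
    lt_of_lt_of_le (hF1 (k+1) (E k)) (min_le_left _ _)
  have hstrict : StrictAnti ε := strictAnti_nat_of_succ_lt hdec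
  have hinj : Function.Injective ε := hstrict.injective
  have htend0 : Tendsto ε atTop (𝓝 0) := by
    apply tendsto_of_tendsto_of_tendsto_of_le_of_le tendsto_const_nhds
      tendsto_one_div_add_atTop_nhds_zero_nat (fun k => (hεpos k).le) (fun k => (hlt k).le)
  have htend : Tendsto ε atTop (𝓝[>] (0:ℝ)) :=
    tendsto_nhdsWithin_iff.2 ⟨htend0, Filter.Eventually.of_forall fun k => hεpos k⟩
  have hρk : ∀ k, 0 < ρ (ε k) := fun k => hρpos _ ⟨hεpos k, hle1 k⟩
  have hsvec : ∀ k, ∃ v : Fin n → ℝ, (∃ i₀, v i₀ = 1) ∧ (∀ i, |v i| ≤ 1) ∧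
      ∀ i, |(Matrix.of fun i j => B i j (ε k)).mulVec v i| ≤
        (n.factorial : ℝ) * ρ (ε k) ^ (k+1 : ℕ) := by
    intro k
    have hρkk := hρk k
    apply det_small_vec _ _ (by positivity)
    have h1 : |d (ε k)| < ρ (ε k) ^ (n*(k+1) : ℕ) := by
      have := hdlt k; rwa [Real.rpow_natCast] at this
    have hf1 : (1:ℝ) ≤ (n.factorial : ℝ) := by exact_mod_cast n.factorial_pos
    have hfp : (n.factorial : ℝ) ≤ (n.factorial : ℝ)^n :=
      le_self_pow₀ hf1 (Nat.pos_iff_ne_zero.1 hn)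
    have hppos : (0:ℝ) < ρ (ε k) ^ (n*(k+1) : ℕ) := pow_pos hρkk _
    have hEq : ρ (ε k) ^ (n*(k+1) : ℕ) * (n.factorial : ℝ)^n
        = ((n.factorial : ℝ) * ρ (ε k) ^ (k+1 : ℕ))^n := by
      rw [mul_pow, ← pow_mul, Nat.mul_comm (k+1) n]
      ring
    calc |(Matrix.of fun i j => B i j (ε k)).det| * (n.factorial : ℝ)
        = |d (ε k)| * (n.factorial : ℝ) := rfl
      _ < ρ (ε k) ^ (n*(k+1) : ℕ) * (n.factorial : ℝ) :=
          mul_lt_mul_of_pos_right h1 (by positivity)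
      _ ≤ ρ (ε k) ^ (n*(k+1) : ℕ) * (n.factorial : ℝ)^n :=
          mul_le_mul_of_nonneg_left hfp hppos.le
      _ = ((n.factorial : ℝ) * ρ (ε k) ^ (k+1 : ℕ))^n := hEq
  choose v hv1 hv2 hv3 using hsvec
  choose idx hidx using hv1
  refine ⟨fun i => Function.extend ε (fun k => v k i) (fun _ => 0), ?_, ?_, ?_⟩
  · intro i e
    show |Function.extend ε (fun k => v k i) (fun _ => 0) e| ≤ 1
    rw [Function.extend_def]
    by_cases h : ∃ k, ε k = e
    · rw [dif_pos h]; exact hv2 _ i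
    · rw [dif_neg h]; simp
  · intro hcon
    have hcomp : Tendsto (fun k => ρ (ε k)) atTop (𝓝 0) := hρ0.comp htend
    have hev : ∀ i : Fin n, ∀ᶠ k in atTop,
        |Function.extend ε (fun k' => v k' i) (fun _ => 0) (ε k)| < 1 := by
      intro i
      obtain ⟨C, hC⟩ := Asymptotics.isBigO_iff.1 (hcon i 1 one_pos)
      have h2 := htend.eventually hC
      have h3 : Tendsto (fun k => C * |ρ (ε k) ^ (1:ℝ)|) atTop (𝓝 0) := by
        have : Tendsto (fun k => |ρ (ε k) ^ (1:ℝ)|) atTop (𝓝 0) := by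
          simp only [Real.rpow_one]
          simpa using hcomp.abs
        simpa using this.const_mul C
      have h4 := h3.eventually_lt_const one_pos
      filter_upwards [h2, h4] with k hk1 hk2
      calc |Function.extend ε (fun k' => v k' i) (fun _ => 0) (ε k)|
          ≤ C * |ρ (ε k) ^ (1:ℝ)| := by
            simpa [Real.norm_eq_abs] using hk1
        _ < 1 := hk2
    obtain ⟨k, hk⟩ := (Filter.eventually_all.2 hev).exists
    have hcontr := hk (idx k)
    rw [hinj.extend_apply, hidx k] at hcontr
    simp at hcontr
  · intro i a ha
    obtain ⟨K, hK⟩ := exists_nat_ge a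
    apply Asymptotics.IsBigO.of_bound (n.factorial : ℝ)
    have hmem : Set.Ioo (0:ℝ) (ε K) ∈ 𝓝[>] (0:ℝ) :=
      Ioo_mem_nhdsGT_of_mem ⟨le_refl 0, hεpos K⟩
    have hmem' : ∀ᶠ e in 𝓝[>] (0:ℝ), e ∈ Set.Ioo (0:ℝ) (ε K) := hmem
    filter_upwards [hmem', hb] with e he hbe
    obtain ⟨hρ1, hρ2⟩ := hbe
    show ‖∑ j, B i j e * Function.extend ε (fun k' => v k' j) (fun _ => 0) e‖ ≤
      (n.factorial : ℝ) * ‖ρ e ^ a‖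
    by_cases hex : ∃ k, ε k = e
    · obtain ⟨k, rfl⟩ := hex
      have hkK : K < k := by
        by_contra hc
        push_neg at hc
        exact absurd he.2 (not_lt.2 (hstrict.antitone hc))
      have hsum : (∑ j, B i j (ε k) * Function.extend ε (fun k' => v k' j) (fun _ => 0) (ε k))
          = (Matrix.of fun i j => B i j (ε k)).mulVec (v k) i := by
        simp only [hinj.extend_apply]
        simp [Matrix.mulVec, dotProduct]
      have h6 : ρ (ε k) ^ (k+1 : ℕ) ≤ ρ (ε k) ^ a := by
        rw [← Real.rpow_natCast (ρ (ε k)) (k+1)]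
        apply Real.rpow_le_rpow_of_exponent_ge hρ1 hρ2
        calc a ≤ (K : ℝ) := hK
          _ ≤ ((k+1 : ℕ) : ℝ) := by exact_mod_cast Nat.le_of_lt (Nat.lt_succ_of_lt hkK)
      rw [Real.norm_eq_abs, Real.norm_eq_abs, hsum,
        abs_of_pos (Real.rpow_pos_of_pos hρ1 a)]
      calc |(Matrix.of fun i j => B i j (ε k)).mulVec (v k) i|
          ≤ (n.factorial : ℝ) * ρ (ε k) ^ (k+1 : ℕ) := hv3 k i
        _ ≤ (n.factorial : ℝ) * ρ (ε k) ^ a :=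
            mul_le_mul_of_nonneg_left h6 (by positivity)
    · have hz : ∀ j, Function.extend ε (fun k' => v k' j) (fun _ => 0) e = 0 :=
        fun j => Function.extend_apply' _ _ _ hex
      simp only [hz, mul_zero, Finset.sum_const_zero, norm_zero]
      positivity

/-- For an `n×n` matrix `A` over `ρ-ℝ̃` the following are equivalent:
(1) `A` is nondegenerate (`ξᵗAη = 0` for all `η` implies `ξ = 0`);
(2) `A : ρ-ℝ̃^n → ρ-ℝ̃^n` is injective;
(3) `A : ρ-ℝ̃^n → ρ-ℝ̃^n` is surjective;
(4) `det A` is invertible in `ρ-ℝ̃`.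
Everything is expressed via (ρ-moderate) representatives, with equality in `ρ-ℝ̃` meaning
negligibility of the difference. -/
theorem matrix_nondegenerate_tfae (n : ℕ) (ρ : ℝ → ℝ)
    (hρpos : ∀ ε ∈ Set.Ioc (0:ℝ) 1, 0 < ρ ε)
    (hρ0 : Tendsto ρ (𝓝[>] (0:ℝ)) (𝓝 0))
    (A : Fin n → Fin n → ℝ → ℝ) (hA : ∀ i j, RMod ρ (A i j)) :
    -- (1) nondegenerate
    ((∀ ξ : Fin n → ℝ → ℝ, VecMod n ρ ξ →
        (∀ η : Fin n → ℝ → ℝ, VecMod n ρ η →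
          RNegl ρ (fun ε => ∑ i, ∑ j, ξ i ε * A i j ε * η j ε)) →
        VecNegl n ρ ξ) ↔
    -- (2) injective
      (∀ ξ ξ' : Fin n → ℝ → ℝ, VecMod n ρ ξ → VecMod n ρ ξ' →
        (∀ i, RNegl ρ (fun ε => (∑ j, A i j ε * ξ j ε) - ∑ j, A i j ε * ξ' j ε)) →
        VecNegl n ρ (fun i => ξ i - ξ' i))) ∧
    -- (2) ↔ (3) surjective
    ((∀ ξ ξ' : Fin n → ℝ → ℝ, VecMod n ρ ξ → VecMod n ρ ξ' →
        (∀ i, RNegl ρ (fun ε => (∑ j, A i j ε * ξ j ε) - ∑ j, A i j ε * ξ' j ε)) →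
        VecNegl n ρ (fun i => ξ i - ξ' i)) ↔
      (∀ η : Fin n → ℝ → ℝ, VecMod n ρ η →
        ∃ ξ : Fin n → ℝ → ℝ, VecMod n ρ ξ ∧
          ∀ i, RNegl ρ (fun ε => (∑ j, A i j ε * ξ j ε) - η i ε))) ∧
    -- (3) ↔ (4) det invertible
    ((∀ η : Fin n → ℝ → ℝ, VecMod n ρ η →
        ∃ ξ : Fin n → ℝ → ℝ, VecMod n ρ ξ ∧
          ∀ i, RNegl ρ (fun ε => (∑ j, A i j ε * ξ j ε) - η i ε)) ↔
      RInv ρ (fun ε => Matrix.det (Matrix.of fun i j => A i j ε))) := by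
  classical
  have hb : Hb ρ := hb_of hρpos hρ0
  rcases Nat.eq_zero_or_pos n with hn0 | hn
  · subst hn0
    have hP4 : RInv ρ (fun ε => Matrix.det (Matrix.of fun i j => A i j ε)) := by
      refine ⟨fun _ => 1, RMod.const hb 1, ?_⟩
      intro a ha
      apply Asymptotics.IsBigO.of_bound 1
      filter_upwards [hb] with e he
      obtain ⟨h1, h2⟩ := he
      show ‖Matrix.det (Matrix.of fun i j => A i j e) * 1 - 1‖ ≤ 1 * ‖ρ e ^ a‖
      rw [Matrix.det_fin_zero]
      simp only [mul_one, sub_self, norm_zero, one_mul]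
      positivity
    refine ⟨⟨fun _ ξ ξ' _ _ _ i => i.elim0, fun _ ξ _ _ i => i.elim0⟩,
      ⟨fun _ η hη => ⟨η, hη, fun i => i.elim0⟩, fun _ ξ ξ' _ _ _ i => i.elim0⟩,
      iff_of_true (fun η hη => ⟨η, hη, fun i => i.elim0⟩) hP4⟩
  · set d : ℝ → ℝ := fun ε => Matrix.det (Matrix.of fun i j => A i j ε) with hd
    set B : Fin n → Fin n → ℝ → ℝ := fun i j => A j i with hBdef
    have hBmod : ∀ i j, RMod ρ (B i j) := fun i j => hA j i
    have hdB : (fun ε => (Matrix.of fun i j => B i j ε).det) = d := by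
      funext e
      rw [show (Matrix.of fun i j => B i j e) = (Matrix.of fun i j => A i j e).transpose from rfl,
        Matrix.det_transpose]
    -- (4) → (2)
    have h42 : RInv ρ d → (∀ ξ ξ' : Fin n → ℝ → ℝ, VecMod n ρ ξ → VecMod n ρ ξ' →
        (∀ i, RNegl ρ (fun ε => (∑ j, A i j ε * ξ j ε) - ∑ j, A i j ε * ξ' j ε)) →
        VecNegl n ρ (fun i => ξ i - ξ' i)) := by
      intro hinv ξ ξ' hξ hξ' hcond
      have hδ : ∀ i, RMod ρ (fun e => ξ i e - ξ' i e) := fun i => RMod.sub hb (hξ i) (hξ' i)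
      have hcond' : ∀ i, RNegl ρ (fun e => ∑ j, A i j e * ((fun i e => ξ i e - ξ' i e) j e)) := by
        intro i
        refine RNegl.congr (Filter.Eventually.of_forall fun e => ?_) (hcond i)
        show (∑ j, A i j e * ξ j e) - ∑ j, A i j e * ξ' j e = ∑ j, A i j e * (ξ j e - ξ' j e)
        rw [← Finset.sum_sub_distrib]
        exact Finset.sum_congr rfl fun j _ => (mul_sub _ _ _).symm
      exact key_inj hb A hA hinv (fun i e => ξ i e - ξ' i e) hδ hcond'
    -- (4) → (1)
    have h41 : RInv ρ d → (∀ ξ : Fin n → ℝ → ℝ, VecMod n ρ ξ →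
        (∀ η : Fin n → ℝ → ℝ, VecMod n ρ η →
          RNegl ρ (fun ε => ∑ i, ∑ j, ξ i ε * A i j ε * η j ε)) →
        VecNegl n ρ ξ) := by
      intro hinv ξ hξ hpair
      have hinvB : RInv ρ (fun ε => (Matrix.of fun i j => B i j ε).det) := by
        rw [hdB]; exact hinv
      have hcond : ∀ i, RNegl ρ (fun e => ∑ j, B i j e * ξ j e) := by
        intro i0
        have hη : VecMod n ρ (fun j' (_ : ℝ) => if j' = i0 then (1:ℝ) else 0) :=
          fun j' => RMod.const hb _
        have h := hpair _ hη
        refine RNegl.congr (Filter.Eventually.of_forall fun e => ?_) h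
        show (∑ i, ∑ j, ξ i e * A i j e * (if j = i0 then (1:ℝ) else 0))
          = ∑ j, B i0 j e * ξ j e
        calc (∑ i, ∑ j, ξ i e * A i j e * (if j = i0 then (1:ℝ) else 0))
            = ∑ i, ξ i e * A i i0 e := Finset.sum_congr rfl fun i _ => by
              simp only [mul_ite, mul_one, mul_zero, Finset.sum_ite_eq',
                Finset.mem_univ, if_true]
          _ = ∑ j, B i0 j e * ξ j e := Finset.sum_congr rfl fun i _ => by
              show ξ i e * A i i0 e = A i i0 e * ξ i e
              ring
      exact key_inj hb B hBmod hinvB ξ hξ hcond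
    -- (4) → (3)
    have h43 : RInv ρ d → (∀ η : Fin n → ℝ → ℝ, VecMod n ρ η →
        ∃ ξ : Fin n → ℝ → ℝ, VecMod n ρ ξ ∧
          ∀ i, RNegl ρ (fun ε => (∑ j, A i j ε * ξ j ε) - η i ε)) := by
      intro hinv η hη
      obtain ⟨ξ, h1, h2⟩ := key_surj hb A hA hinv η hη
      exact ⟨ξ, h1, h2⟩
    -- ¬(4) → ¬(2)
    have hn2 : ¬ RInv ρ d → ¬ (∀ ξ ξ' : Fin n → ℝ → ℝ, VecMod n ρ ξ → VecMod n ρ ξ' →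
        (∀ i, RNegl ρ (fun ε => (∑ j, A i j ε * ξ j ε) - ∑ j, A i j ε * ξ' j ε)) →
        VecNegl n ρ (fun i => ξ i - ξ' i)) := by
      intro hnot h2
      obtain ⟨ξ, hbd, hnn, hker⟩ := exists_kernel hn hρpos hρ0 A hnot
      have hmod : VecMod n ρ ξ := fun i => RMod.of_bounded hb (hbd i)
      have hz : VecMod n ρ (fun (_ : Fin n) (_ : ℝ) => (0:ℝ)) := fun i => RMod.const hb 0
      have hres := h2 ξ (fun _ _ => 0) hmod hz (by
        intro i
        refine RNegl.congr (Filter.Eventually.of_forall fun e => ?_) (hker i)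
        show ∑ j, A i j e * ξ j e = (∑ j, A i j e * ξ j e) - ∑ j, A i j e * 0
        simp)
      exact hnn fun i => RNegl.congr (Filter.Eventually.of_forall fun e => by
        show ξ i e - 0 = ξ i e; simp) (hres i)
    -- ¬(4) → ¬(1)
    have hn1 : ¬ RInv ρ d → ¬ (∀ ξ : Fin n → ℝ → ℝ, VecMod n ρ ξ →
        (∀ η : Fin n → ℝ → ℝ, VecMod n ρ η →
          RNegl ρ (fun ε => ∑ i, ∑ j, ξ i ε * A i j ε * η j ε)) →
        VecNegl n ρ ξ) := by
      intro hnot h1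
      have hnotB : ¬ RInv ρ (fun ε => (Matrix.of fun i j => B i j ε).det) := by
        rw [hdB]; exact hnot
      obtain ⟨ξ, hbd, hnn, hker⟩ := exists_kernel hn hρpos hρ0 B hnotB
      have hmod : VecMod n ρ ξ := fun i => RMod.of_bounded hb (hbd i)
      apply hnn
      apply h1 ξ hmod
      intro η hη
      have hterm : ∀ j : Fin n, RNegl ρ (fun e => η j e * ∑ i, A i j e * ξ i e) := by
        intro j
        apply RMod.mul_negl hb (hη j)
        refine RNegl.congr (Filter.Eventually.of_forall fun e => ?_) (hker j)
        show ∑ j', B j j' e * ξ j' e = ∑ i, A i j e * ξ i e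
        rfl
      have hsum : RNegl ρ (fun e => ∑ j, η j e * ∑ i, A i j e * ξ i e) :=
        RNegl.sum _ _ fun j _ => hterm j
      refine RNegl.congr (Filter.Eventually.of_forall fun e => ?_) hsum
      show ∑ j, η j e * ∑ i, A i j e * ξ i e = ∑ i, ∑ j, ξ i e * A i j e * η j e
      calc ∑ j, η j e * ∑ i, A i j e * ξ i e
          = ∑ j, ∑ i, ξ i e * A i j e * η j e := Finset.sum_congr rfl fun j _ => by
            rw [Finset.mul_sum]; exact Finset.sum_congr rfl fun i _ => by ring
        _ = ∑ i, ∑ j, ξ i e * A i j e * η j e := Finset.sum_comm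
    -- ¬(4) → ¬(3)
    have hn3 : ¬ RInv ρ d → ¬ (∀ η : Fin n → ℝ → ℝ, VecMod n ρ η →
        ∃ ξ : Fin n → ℝ → ℝ, VecMod n ρ ξ ∧
          ∀ i, RNegl ρ (fun ε => (∑ j, A i j ε * ξ j ε) - η i ε)) := by
      intro hnot h3
      have hnotB : ¬ RInv ρ (fun ε => (Matrix.of fun i j => B i j ε).det) := by
        rw [hdB]; exact hnot
      obtain ⟨η, hbd, hnn, hker⟩ := exists_kernel hn hρpos hρ0 B hnotB
      have hηmod : VecMod n ρ η := fun i => RMod.of_bounded hb (hbd i)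
      obtain ⟨ξ, hξmod, hsol⟩ := h3 η hηmod
      apply hnn
      have hG : RNegl ρ (fun e => ∑ i, η i e * ((∑ j, A i j e * ξ j e) - η i e)) :=
        RNegl.sum _ _ fun i _ => RMod.mul_negl hb (hηmod i) (hsol i)
      have hH : RNegl ρ (fun e => ∑ i, ξ i e * ∑ j, A j i e * η j e) := by
        refine RNegl.sum _ _ fun i _ => RMod.mul_negl hb (hξmod i) ?_
        refine RNegl.congr (Filter.Eventually.of_forall fun e => ?_) (hker i)
        show ∑ j, B i j e * η j e = ∑ j, A j i e * η j e
        rfl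
      have hsq : RNegl ρ (fun e => ∑ i, (η i e)^2) := by
        refine RNegl.congr (Filter.Eventually.of_forall fun e => ?_)
          (RNegl.add hH (RNegl.neg hG))
        show (∑ i, ξ i e * ∑ j, A j i e * η j e)
            + -(∑ i, η i e * ((∑ j, A i j e * ξ j e) - η i e)) = ∑ i, (η i e)^2
        have e1 : ∑ i, ξ i e * ∑ j, A j i e * η j e
            = ∑ i, ∑ j, η j e * A j i e * ξ i e :=
          Finset.sum_congr rfl fun i _ => by
            rw [Finset.mul_sum]; exact Finset.sum_congr rfl fun j _ => by ring
        have e2 : ∑ i, η i e * ((∑ j, A i j e * ξ j e) - η i e)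
            = (∑ i, ∑ j, η i e * A i j e * ξ j e) - ∑ i, (η i e)^2 := by
          rw [← Finset.sum_sub_distrib]
          refine Finset.sum_congr rfl fun i _ => ?_
          rw [mul_sub, Finset.mul_sum]
          congr 1
          · exact Finset.sum_congr rfl fun j _ => by ring
          · ring
        have e3 : (∑ i, ∑ j, η j e * A j i e * ξ i e)
            = ∑ i, ∑ j, η i e * A i j e * ξ j e := Finset.sum_comm
        rw [e1, e2, e3]; ring
      intro i
      apply RNegl.of_sq hb
      refine RNegl.of_abs_le (y := fun e => ∑ i', (η i' e)^2) (fun e => ?_) hsq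
      have h1 : η i e ^ 2 ≤ ∑ i', (η i' e)^2 :=
        Finset.single_le_sum (f := fun i' => (η i' e)^2)
          (fun i' _ => sq_nonneg _) (Finset.mem_univ i)
      have h2 : (0:ℝ) ≤ ∑ i', (η i' e)^2 := Finset.sum_nonneg fun i' _ => sq_nonneg _
      rw [abs_of_nonneg (sq_nonneg _), abs_of_nonneg h2]
      exact h1
    have e14 : (∀ ξ : Fin n → ℝ → ℝ, VecMod n ρ ξ →
        (∀ η : Fin n → ℝ → ℝ, VecMod n ρ η →
          RNegl ρ (fun ε => ∑ i, ∑ j, ξ i ε * A i j ε * η j ε)) →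
        VecNegl n ρ ξ) ↔ RInv ρ d :=
      ⟨fun h1 => Classical.byContradiction fun h4 => hn1 h4 h1, h41⟩
    have e24 : (∀ ξ ξ' : Fin n → ℝ → ℝ, VecMod n ρ ξ → VecMod n ρ ξ' →
        (∀ i, RNegl ρ (fun ε => (∑ j, A i j ε * ξ j ε) - ∑ j, A i j ε * ξ' j ε)) →
        VecNegl n ρ (fun i => ξ i - ξ' i)) ↔ RInv ρ d :=
      ⟨fun h2 => Classical.byContradiction fun h4 => hn2 h4 h2, h42⟩
    have e34 : (∀ η : Fin n → ℝ → ℝ, VecMod n ρ η →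
        ∃ ξ : Fin n → ℝ → ℝ, VecMod n ρ ξ ∧
          ∀ i, RNegl ρ (fun ε => (∑ j, A i j ε * ξ j ε) - η i ε)) ↔ RInv ρ d :=
      ⟨fun h3 => Classical.byContradiction fun h4 => hn3 h4 h3, h43⟩
    exact ⟨e14.trans e24.symm, e24.trans e34.symm, e34⟩
end
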